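/- arXiv:2003.08053 — 3 statements merged into one kernel-verified Lean document; each statement's English description precedes it below -/
import Mathlib

section
/- Let Γ be a commutative thick weakly distance-regular digraph in which C(q) exists and Γ_{1,q-1}^2 = {Γ_{1,q-2}, Γ_{2,q-1}}. Then: (i) for 2 ≤ i ≤ q-1, Γ_{1,q-1}^{2i-1} = Γ_{1,q-2}^{i-1}Γ_{1,q-1} = {Γ_{i,q-i}}; (ii) for 2 ≤ i ≤ q-2, Γ_{1,q-1}^{2i} = Γ_{1,q-2}^{i-1}Γ_{1,q-1}^2 = {Γ_{i,q-i-1}, Γ_{i+1,q-i}}. -/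
/-!
Common framework: commutative thick weakly distance-regular digraphs.
-/

variable {V : Type*}

/-- There is a directed walk of length `n` from `x` to `y`. -/
def HasWalk (adj : V → V → Prop) (x y : V) (n : ℕ) : Prop :=
  ∃ f : ℕ → V, f 0 = x ∧ f n = y ∧ ∀ i < n, adj (f i) (f (i + 1))

/-- Directed distance `∂(x,y)`. -/
noncomputable def ddist (adj : V → V → Prop) (x y : V) : ℕ :=
  sInf {n | HasWalk adj x y n}

/-- Two-way distance `∂̃(x,y) = (∂(x,y), ∂(y,x))`. -/
noncomputable def tdist (adj : V → V → Prop) (x y : V) : ℕ × ℕ :=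
  (ddist adj x y, ddist adj y x)

/-- The pair `i` is an attained two-way distance, i.e. `i ∈ ∂̃(Γ)`. -/
def Attained (adj : V → V → Prop) (i : ℕ × ℕ) : Prop :=
  ∃ x y : V, tdist adj x y = i

/-- Intersection number `p^h_{i,j}`: for attained `h` it is the common cardinality of
`{z | ∂̃(x,z) = i, ∂̃(z,y) = j}` over pairs with `∂̃(x,y) = h` (and `0` otherwise). -/
noncomputable def pnum (adj : V → V → Prop) (h i j : ℕ × ℕ) : ℕ :=
  sSup {n | ∃ x y : V, tdist adj x y = h ∧
    n = Set.ncard {z : V | tdist adj x z = i ∧ tdist adj z y = j}}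

/-- Valency `k_i = |Γ_i(x)|`. -/
noncomputable def kval (adj : V → V → Prop) (i : ℕ × ℕ) : ℕ :=
  pnum adj (0, 0) i i.swap

/-- Adjacency of the subdigraph `Δ_J`: arcs of type `(1, t-1)` for `t ∈ J`. -/
def deltaAdj (adj : V → V → Prop) (J : Set ℕ) (u v : V) : Prop :=
  ∃ t ∈ J, tdist adj u v = (1, t - 1)

/-- A circuit of length `s`. -/
def IsCircuit (adj : V → V → Prop) (s : ℕ) (f : ℕ → V) : Prop :=
  0 < s ∧ f s = f 0 ∧ ∀ i < s, adj (f i) (f (i + 1))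

/-- Strongly connected. -/
def IsStrong (adj : V → V → Prop) : Prop :=
  ∀ x y : V, ∃ n, HasWalk adj x y n

/-- Weakly distance-regular: the intersection numbers are well defined. -/
def IsWDR (adj : V → V → Prop) : Prop :=
  ∀ (i j : ℕ × ℕ) (x y x' y' : V), tdist adj x y = tdist adj x' y' →
    Set.ncard {z : V | tdist adj x z = i ∧ tdist adj z y = j}
      = Set.ncard {z : V | tdist adj x' z = i ∧ tdist adj z y' = j}

/-- Thick: `p^h_{i,i}, p^h_{i,i*} ∈ {0, k_i}`. -/
def IsThick (adj : V → V → Prop) : Prop :=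
  ∀ h i : ℕ × ℕ,
    (pnum adj h i i = 0 ∨ pnum adj h i i = kval adj i) ∧
    (pnum adj h i i.swap = 0 ∨ pnum adj h i i.swap = kval adj i)

/-- A thick weakly distance-regular digraph (as a property of an adjacency relation). -/
def IsWDRThick (adj : V → V → Prop) : Prop :=
  IsStrong adj ∧ IsWDR adj ∧ IsThick adj

/-- A commutative thick weakly distance-regular digraph. -/
structure CTWDR (V : Type*) [Fintype V] where
  adj : V → V → Prop
  loopless : ∀ v, ¬ adj v v
  strong : IsStrong adj
  wdr : IsWDR adj
  comm : ∀ (i j : ℕ × ℕ) (x y : V),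
    Set.ncard {z : V | tdist adj x z = i ∧ tdist adj z y = j}
      = Set.ncard {z : V | tdist adj x z = j ∧ tdist adj z y = i}
  thick : IsThick adj

namespace CTWDR

variable {V : Type*} [Fintype V] (G : CTWDR V)

/-- Product `EF` of two sets of relations (relations identified with two-way distances). -/
def prodS (E F : Set (ℕ × ℕ)) : Set (ℕ × ℕ) :=
  {h | ∃ i ∈ E, ∃ j ∈ F, pnum G.adj h i j ≠ 0}

/-- Powers `Γ_i^l` (with `Γ_i^0 = {Γ_{(0,0)}}` and `Γ_i^1 = {Γ_i}`). -/
def pow (i : ℕ × ℕ) : ℕ → Set (ℕ × ℕ)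
  | 0 => {(0, 0)}
  | 1 => {i}
  | n + 2 => G.prodS (pow i (n + 1)) {i}

/-- The pair `(1, s-1)` is pure: every circuit of length `s` containing an arc of type
`(1, s-1)` consists of arcs of type `(1, s-1)`. -/
def Pure (s : ℕ) : Prop :=
  ∀ f : ℕ → V, IsCircuit G.adj s f →
    (∃ i < s, tdist G.adj (f i) (f (i + 1)) = (1, s - 1)) →
    ∀ i < s, tdist G.adj (f i) (f (i + 1)) = (1, s - 1)

/-- `(1, s-1)` is mixed. -/
def Mixed (s : ℕ) : Prop := ¬ G.Pure s

/-- Configuration `C(q)` exists. -/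
def Cexists (q : ℕ) : Prop :=
  pnum G.adj (1, q - 2) (1, q - 1) (1, q - 1) ≠ 0 ∧ G.Pure (q - 1)

/-- Configuration `D(q)` exists. -/
def Dexists (q : ℕ) : Prop :=
  pnum G.adj (1, q - 1) (1, q - 2) (q - 2, 1) ≠ 0 ∧ G.Pure (q - 1)

/-- A closed set of relations: `Γ_{i*}Γ_j ⊆ F` for all `i, j ∈ F`. -/
def Closed (F : Set (ℕ × ℕ)) : Prop :=
  ∀ i ∈ F, ∀ j ∈ F, G.prodS {i.swap} {j} ⊆ F

/-- The minimal closed set `⟨F⟩` containing `F`. -/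
def genClosed (F : Set (ℕ × ℕ)) : Set (ℕ × ℕ) :=
  ⋂₀ {C | F ⊆ C ∧ G.Closed C}

/-- The block `F_J(x)` of the closed set generated by `{Γ_{1,t-1}}_{t ∈ J}`. -/
def block (J : Set ℕ) (x : V) : Set V :=
  {y | tdist G.adj x y ∈ G.genClosed {i | ∃ t ∈ J, i = (1, t - 1)}}

end CTWDR

namespace StmtAux

variable {V : Type*}

/-! ### Walk basics -/

lemma hasWalk_zero {adj : V → V → Prop} {x y : V} : HasWalk adj x y 0 ↔ x = y := by
  constructor
  · rintro ⟨f, h0, hn, _⟩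
    rw [← h0, ← hn]
  · rintro rfl
    exact ⟨fun _ => x, rfl, rfl, fun i hi => absurd hi (by omega)⟩

lemma hasWalk_one {adj : V → V → Prop} {x y : V} : HasWalk adj x y 1 ↔ adj x y := by
  constructor
  · rintro ⟨f, h0, hn, ha⟩
    have := ha 0 (by omega)
    rwa [h0, hn] at this
  · intro h
    refine ⟨fun i => if i = 0 then x else y, by simp, by simp, ?_⟩
    intro i hi
    have : i = 0 := by omega
    simp [this, h]

/-- concatenation function -/
def catF (f₁ f₂ : ℕ → V) (m : ℕ) : ℕ → V := fun i => if i < m then f₁ i else f₂ (i - m)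

lemma catF_left {f₁ f₂ : ℕ → V} {m : ℕ} (h : f₂ 0 = f₁ m) {i : ℕ} (hi : i ≤ m) :
    catF f₁ f₂ m i = f₁ i := by
  rcases lt_or_eq_of_le hi with h' | h'
  · simp [catF, h']
  · subst h'; simp [catF, h]

lemma catF_right {f₁ f₂ : ℕ → V} {m : ℕ} (j : ℕ) :
    catF f₁ f₂ m (m + j) = f₂ j := by
  simp [catF]

lemma catF_adj {adj : V → V → Prop} {f₁ f₂ : ℕ → V} {m n : ℕ} (h : f₂ 0 = f₁ m)
    (h₁ : ∀ i < m, adj (f₁ i) (f₁ (i + 1))) (h₂ : ∀ i < n, adj (f₂ i) (f₂ (i + 1))) :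
    ∀ i < m + n, adj (catF f₁ f₂ m i) (catF f₁ f₂ m (i + 1)) := by
  intro i hi
  rcases lt_or_ge i m with h' | h'
  · rw [catF_left h (by omega)]
    rw [catF_left h (by omega)]
    exact h₁ i h'
  · obtain ⟨j, rfl⟩ : ∃ j, i = m + j := ⟨i - m, by omega⟩
    rw [catF_right, show m + j + 1 = m + (j + 1) by omega, catF_right]
    exact h₂ j (by omega)

lemma walk_comp {adj : V → V → Prop} {x y z : V} {m n : ℕ}
    (h1 : HasWalk adj x y m) (h2 : HasWalk adj y z n) : HasWalk adj x z (m + n) := by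
  obtain ⟨f₁, hf0, hfm, hfa⟩ := h1
  obtain ⟨f₂, hg0, hgn, hga⟩ := h2
  have hb : f₂ 0 = f₁ m := by rw [hg0, hfm]
  refine ⟨catF f₁ f₂ m, ?_, ?_, catF_adj hb hfa hga⟩
  · rw [catF_left hb (by omega), hf0]
  · rw [show m + n = m + n from rfl, catF_right, hgn]

lemma hasWalk_shift {adj : V → V → Prop} {x y : V} {n : ℕ} (h : HasWalk adj x y n)
    (i : ℕ) (hi : i ≤ n) : ∃ w, HasWalk adj x w i ∧ HasWalk adj w y (n - i) := by
  obtain ⟨f, hf0, hfn, hfa⟩ := h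
  refine ⟨f i, ⟨f, hf0, rfl, fun j hj => hfa j (by omega)⟩,
    ⟨fun j => f (i + j), rfl, by show f (i + (n - i)) = y; rw [show i + (n - i) = n by omega, hfn], ?_⟩⟩
  intro j hj
  have := hfa (i + j) (by omega)
  rwa [show i + j + 1 = i + (j + 1) by omega] at this

/-! ### ddist basics -/

lemma ddist_le_of_walk {adj : V → V → Prop} {x y : V} {n : ℕ} (h : HasWalk adj x y n) :
    ddist adj x y ≤ n := Nat.sInf_le h

lemma walkset_nonempty_of_ddist_ne_zero {adj : V → V → Prop} {x y : V}
    (h : ddist adj x y ≠ 0) : {n | HasWalk adj x y n}.Nonempty := by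
  by_contra hne
  rw [Set.not_nonempty_iff_eq_empty] at hne
  apply h
  unfold ddist
  rw [hne, Nat.sInf_empty]

lemma walk_ddist {adj : V → V → Prop} (hs : IsStrong adj) (x y : V) :
    HasWalk adj x y (ddist adj x y) := by
  have : {n | HasWalk adj x y n}.Nonempty := by
    obtain ⟨n, hn⟩ := hs x y
    exact ⟨n, hn⟩
  exact Nat.sInf_mem this

lemma ddist_self {adj : V → V → Prop} (x : V) : ddist adj x x = 0 :=
  Nat.le_zero.mp (ddist_le_of_walk (hasWalk_zero.mpr rfl))

lemma eq_of_ddist_eq_zero {adj : V → V → Prop} (hs : IsStrong adj) {x y : V}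
    (h : ddist adj x y = 0) : x = y := by
  have := walk_ddist hs x y
  rw [h] at this
  exact hasWalk_zero.mp this

lemma ddist_triangle {adj : V → V → Prop} (hs : IsStrong adj) (x y z : V) :
    ddist adj x z ≤ ddist adj x y + ddist adj y z :=
  ddist_le_of_walk (walk_comp (walk_ddist hs x y) (walk_ddist hs y z))

lemma adj_of_ddist_one {adj : V → V → Prop} {x y : V} (h : ddist adj x y = 1) :
    adj x y := by
  have hne : {n | HasWalk adj x y n}.Nonempty := walkset_nonempty_of_ddist_ne_zero (by omega)
  have := Nat.sInf_mem hne
  unfold ddist at h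
  rw [h] at this
  exact hasWalk_one.mp this

/-- shortest path with distance marks -/
lemma exists_sp {adj : V → V → Prop} (hs : IsStrong adj) (x y : V) :
    ∃ f : ℕ → V, f 0 = x ∧ f (ddist adj x y) = y ∧
      (∀ i < ddist adj x y, adj (f i) (f (i + 1))) ∧
      (∀ i ≤ ddist adj x y, ddist adj x (f i) = i ∧ ddist adj (f i) y = ddist adj x y - i) := by
  obtain ⟨f, hf0, hfn, hfa⟩ := walk_ddist hs x y
  refine ⟨f, hf0, hfn, hfa, ?_⟩
  intro i hi
  have h1 : ddist adj x (f i) ≤ i := by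
    refine ddist_le_of_walk ⟨f, hf0, rfl, fun j hj => hfa j (by omega)⟩
  have h2 : ddist adj (f i) y ≤ ddist adj x y - i := by
    refine ddist_le_of_walk ⟨fun j => f (i + j), rfl, ?_, ?_⟩
    · show f (i + (ddist adj x y - i)) = y
      rw [show i + (ddist adj x y - i) = ddist adj x y by omega, hfn]
    · intro j hj
      have := hfa (i + j) (by omega)
      rwa [show i + j + 1 = i + (j + 1) by omega] at this
  have h3 := ddist_triangle hs x (f i) y
  omega

/-! ### tdist basics -/

lemma tdist_mk {adj : V → V → Prop} (x y : V) :
    tdist adj x y = (ddist adj x y, ddist adj y x) := rfl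

lemma tdist_swap {adj : V → V → Prop} (x y : V) :
    tdist adj y x = (tdist adj x y).swap := rfl

lemma tdist_self {adj : V → V → Prop} (x : V) : tdist adj x x = (0, 0) := by
  rw [tdist_mk, ddist_self]

lemma adj_of_tdist_fst_one {adj : V → V → Prop} {x y : V} {t : ℕ}
    (h : tdist adj x y = (1, t)) : adj x y := by
  rw [tdist_mk, Prod.mk.injEq] at h
  exact adj_of_ddist_one h.1

end StmtAux

namespace StmtAux

variable {V : Type*}

lemma tdist_fst {adj : V → V → Prop} {x y : V} {a b : ℕ} (h : tdist adj x y = (a, b)) :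
    ddist adj x y = a := by
  rw [tdist_mk, Prod.mk.injEq] at h
  exact h.1

lemma tdist_snd {adj : V → V → Prop} {x y : V} {a b : ℕ} (h : tdist adj x y = (a, b)) :
    ddist adj y x = b := by
  rw [tdist_mk, Prod.mk.injEq] at h
  exact h.2

lemma tdist_eq_of {adj : V → V → Prop} {x y : V} {a b : ℕ} (h1 : ddist adj x y = a)
    (h2 : ddist adj y x = b) : tdist adj x y = (a, b) := by
  rw [tdist_mk, h1, h2]

end StmtAux

namespace StmtAux

variable {V : Type*}

/-! ### Relational walks -/

def RW (adj : V → V → Prop) (c : ℕ × ℕ) : ℕ → V → V → Prop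
  | 0, x, y => x = y
  | n + 1, x, y => ∃ w, RW adj c n x w ∧ tdist adj w y = c

lemma rw_zero {adj : V → V → Prop} {c : ℕ × ℕ} {x y : V} : RW adj c 0 x y ↔ x = y :=
  Iff.rfl

lemma rw_succ {adj : V → V → Prop} {c : ℕ × ℕ} {n : ℕ} {x y : V} :
    RW adj c (n + 1) x y ↔ ∃ w, RW adj c n x w ∧ tdist adj w y = c := Iff.rfl

lemma rw_one {adj : V → V → Prop} {c : ℕ × ℕ} {x y : V} :
    RW adj c 1 x y ↔ tdist adj x y = c := by
  rw [rw_succ]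
  constructor
  · rintro ⟨w, hw, hwc⟩
    rw [rw_zero] at hw
    rwa [← hw] at hwc
  · intro h
    exact ⟨x, rfl, h⟩

lemma rw_single {adj : V → V → Prop} {c : ℕ × ℕ} {x y : V} (h : tdist adj x y = c) :
    RW adj c 1 x y := rw_one.mpr h

lemma rw_comp {adj : V → V → Prop} {c : ℕ × ℕ} {m n : ℕ} {x y z : V}
    (h1 : RW adj c m x y) (h2 : RW adj c n y z) : RW adj c (m + n) x z := by
  induction n generalizing z with
  | zero => rw [rw_zero] at h2; rwa [← h2]
  | succ n ih =>
    obtain ⟨w, hw, hwc⟩ := h2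
    exact ⟨w, ih hw, hwc⟩

lemma rw_head {adj : V → V → Prop} {c : ℕ × ℕ} {n : ℕ} {x y : V} :
    RW adj c (n + 1) x y ↔ ∃ w, tdist adj x w = c ∧ RW adj c n w y := by
  induction n generalizing y with
  | zero =>
    rw [rw_one]
    constructor
    · intro h; exact ⟨y, h, rfl⟩
    · rintro ⟨w, hw, hwy⟩; rw [rw_zero] at hwy; rwa [← hwy]
  | succ n ih =>
    constructor
    · rintro ⟨w, hw, hwc⟩
      obtain ⟨u, hu, huw⟩ := ih.mp hw
      exact ⟨u, hu, w, huw, hwc⟩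
    · rintro ⟨w, hw, u, huw, huc⟩
      exact ⟨u, ih.mpr ⟨w, hw, huw⟩, huc⟩

lemma rw_to_walk {adj : V → V → Prop} {c : ℕ × ℕ} (hc : c.1 = 1) {n : ℕ} {x y : V}
    (h : RW adj c n x y) : HasWalk adj x y n := by
  induction n generalizing y with
  | zero => rw [rw_zero] at h; rw [← h]; exact hasWalk_zero.mpr rfl
  | succ n ih =>
    obtain ⟨w, hw, hwc⟩ := h
    have : adj w y := by
      apply adj_of_tdist_fst_one (t := c.2)
      rw [hwc]
      exact (Prod.mk.injEq _ _ _ _).mpr ⟨hc.symm, rfl⟩ |>.symm ▸ rfl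
    exact walk_comp (ih hw) (hasWalk_one.mpr this)

lemma rw_ddist_le {adj : V → V → Prop} {c : ℕ × ℕ} (hc : c.1 = 1) {n : ℕ} {x y : V}
    (h : RW adj c n x y) : ddist adj x y ≤ n := ddist_le_of_walk (rw_to_walk hc h)

lemma rw_to_f {adj : V → V → Prop} {c : ℕ × ℕ} {n : ℕ} {x y : V} (h : RW adj c n x y) :
    ∃ f : ℕ → V, f 0 = x ∧ f n = y ∧ ∀ i < n, tdist adj (f i) (f (i + 1)) = c := by
  induction n generalizing y with
  | zero =>
    rw [rw_zero] at h
    exact ⟨fun _ => x, rfl, h, fun i hi => absurd hi (by omega)⟩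
  | succ n ih =>
    obtain ⟨w, hw, hwc⟩ := h
    obtain ⟨f, hf0, hfn, hfa⟩ := ih hw
    refine ⟨fun i => if i ≤ n then f i else y, by simp [hf0], by simp, ?_⟩
    intro i hi
    rcases lt_or_ge i n with h' | h'
    · simpa [show i ≤ n by omega, show i + 1 ≤ n by omega] using hfa i h'
    · have : i = n := by omega
      subst this
      simpa [hfn] using hwc

end StmtAux

namespace StmtAux

variable {V : Type*} [Fintype V] (G : CTWDR V)

/-! ### pnum machinery -/

lemma pnum_eq_ncard {h : ℕ × ℕ} {x y : V} (hxy : tdist G.adj x y = h) (i j : ℕ × ℕ) :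
    pnum G.adj h i j = Set.ncard {z : V | tdist G.adj x z = i ∧ tdist G.adj z y = j} := by
  unfold pnum
  have : {n | ∃ x' y' : V, tdist G.adj x' y' = h ∧
      n = Set.ncard {z : V | tdist G.adj x' z = i ∧ tdist G.adj z y' = j}}
      = {Set.ncard {z : V | tdist G.adj x z = i ∧ tdist G.adj z y = j}} := by
    ext n
    simp only [Set.mem_setOf_eq, Set.mem_singleton_iff]
    constructor
    · rintro ⟨x', y', hxy', rfl⟩
      exact G.wdr i j x' y' x y (by rw [hxy', hxy])
    · rintro rfl
      exact ⟨x, y, hxy, rfl⟩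
  rw [this, csSup_singleton]

lemma mid_exists {h i j : ℕ × ℕ} {x y : V} (hp : pnum G.adj h i j ≠ 0)
    (hxy : tdist G.adj x y = h) :
    ∃ z, tdist G.adj x z = i ∧ tdist G.adj z y = j := by
  rw [pnum_eq_ncard G hxy i j] at hp
  exact Set.nonempty_of_ncard_ne_zero hp

lemma pnum_ne_zero {i j : ℕ × ℕ} {x z y : V} (hxz : tdist G.adj x z = i)
    (hzy : tdist G.adj z y = j) : pnum G.adj (tdist G.adj x y) i j ≠ 0 := by
  rw [pnum_eq_ncard G rfl i j]
  have : 0 < Set.ncard {z : V | tdist G.adj x z = i ∧ tdist G.adj z y = j} :=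
    (Set.ncard_pos (Set.toFinite _)).mpr ⟨z, hxz, hzy⟩
  omega

lemma pnum_pair_exists {h i j : ℕ × ℕ} (hp : pnum G.adj h i j ≠ 0) :
    ∃ x y z : V, tdist G.adj x y = h ∧ tdist G.adj x z = i ∧ tdist G.adj z y = j := by
  have hne : {n | ∃ x y : V, tdist G.adj x y = h ∧
      n = Set.ncard {z : V | tdist G.adj x z = i ∧ tdist G.adj z y = j}}.Nonempty := by
    by_contra hempty
    rw [Set.not_nonempty_iff_eq_empty] at hempty
    apply hp
    unfold pnum
    rw [hempty]
    simpa using csSup_empty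
  obtain ⟨n, x, y, hxy, hn⟩ := hne
  obtain ⟨z, hz1, hz2⟩ := mid_exists G hp hxy
  exact ⟨x, y, z, hxy, hz1, hz2⟩

lemma kval_eq (i : ℕ × ℕ) (x : V) :
    kval G.adj i = Set.ncard {z : V | tdist G.adj x z = i} := by
  unfold kval
  rw [pnum_eq_ncard G (tdist_self x) i i.swap]
  congr 1
  ext z
  simp only [Set.mem_setOf_eq]
  constructor
  · rintro ⟨h1, _⟩; exact h1
  · intro h1; exact ⟨h1, by rw [tdist_swap, h1]⟩

lemma attained_nonempty {i : ℕ × ℕ} {x₀ y₀ : V} (h : tdist G.adj x₀ y₀ = i) (x : V) :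
    ∃ z, tdist G.adj x z = i := by
  have h1 : kval G.adj i = Set.ncard {z : V | tdist G.adj x₀ z = i} := kval_eq G i x₀
  have h2 : kval G.adj i = Set.ncard {z : V | tdist G.adj x z = i} := kval_eq G i x
  have hpos : 0 < Set.ncard {z : V | tdist G.adj x₀ z = i} :=
    (Set.ncard_pos (Set.toFinite _)).mpr ⟨y₀, h⟩
  have : 0 < Set.ncard {z : V | tdist G.adj x z = i} := by omega
  exact (Set.ncard_pos (Set.toFinite _)).mp this

lemma full {h i : ℕ × ℕ} {x y w : V} (hp : pnum G.adj h i i ≠ 0)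
    (hxy : tdist G.adj x y = h) (hxw : tdist G.adj x w = i) : tdist G.adj w y = i := by
  have hk : pnum G.adj h i i = kval G.adj i := by
    rcases (G.thick h i).1 with h' | h'
    · exact absurd h' hp
    · exact h'
  have heq : {z : V | tdist G.adj x z = i ∧ tdist G.adj z y = i} = {z : V | tdist G.adj x z = i} := by
    have hcard : Set.ncard {z : V | tdist G.adj x z = i}
        = Set.ncard {z : V | tdist G.adj x z = i ∧ tdist G.adj z y = i} := by
      rw [← pnum_eq_ncard G hxy i i, hk, kval_eq G i x]
    exact Set.eq_of_subset_of_ncard_le (fun z hz => hz.1) (le_of_eq hcard) (Set.toFinite _)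
  have hw : w ∈ {z : V | tdist G.adj x z = i ∧ tdist G.adj z y = i} := by
    rw [heq]; exact hxw
  exact hw.2

lemma full' {i : ℕ × ℕ} {x y m w : V} (hxm : tdist G.adj x m = i) (hmy : tdist G.adj m y = i)
    (hxw : tdist G.adj x w = i) : tdist G.adj w y = i :=
  full G (pnum_ne_zero G hxm hmy) rfl hxw

lemma comm_mid {i j : ℕ × ℕ} {x y : V}
    (hex : ∃ z, tdist G.adj x z = i ∧ tdist G.adj z y = j) :
    ∃ z, tdist G.adj x z = j ∧ tdist G.adj z y = i := by
  have h := G.comm i j x y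
  have h1 : 0 < Set.ncard {z : V | tdist G.adj x z = i ∧ tdist G.adj z y = j} := by
    obtain ⟨z, hz⟩ := hex
    exact (Set.ncard_pos (Set.toFinite _)).mpr ⟨z, hz⟩
  have h2 : 0 < Set.ncard {z : V | tdist G.adj x z = j ∧ tdist G.adj z y = i} := by omega
  exact (Set.ncard_pos (Set.toFinite _)).mp h2

end StmtAux

namespace StmtAux

variable {V : Type*} [Fintype V] {G : CTWDR V} {q : ℕ}

section Context

lemma q3 (hC : G.Cexists q) : 3 ≤ q := by
  obtain ⟨x, y, z, hxy, hxz, hzy⟩ := pnum_pair_exists G hC.1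
  by_contra hq
  have hq2 : q - 2 = 0 := by omega
  rw [hq2] at hxy
  have h0 : ddist G.adj y x = 0 := tdist_snd hxy
  have hxy' : x = y := (eq_of_ddist_eq_zero G.strong h0).symm
  have h1 : ddist G.adj x y = 1 := tdist_fst hxy
  rw [← hxy', ddist_self] at h1
  exact absurd h1 (by omega)

lemma exA (hC : G.Cexists q) : ∃ x z : V, tdist G.adj x z = (1, q - 1) := by
  obtain ⟨x, y, z, hxy, hxz, hzy⟩ := pnum_pair_exists G hC.1
  exact ⟨x, z, hxz⟩

lemma exB (hC : G.Cexists q) : ∃ x y : V, tdist G.adj x y = (1, q - 2) := by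
  obtain ⟨x, y, z, hxy, hxz, hzy⟩ := pnum_pair_exists G hC.1
  exact ⟨x, y, hxy⟩

lemma pow_two (G : CTWDR V) (i : ℕ × ℕ) : G.pow i 2 = G.prodS {i} {i} := rfl

lemma pnumD2 (h2 : G.pow (1, q - 1) 2 = ({(1, q - 2), (2, q - 1)} : Set (ℕ × ℕ))) :
    pnum G.adj (2, q - 1) (1, q - 1) (1, q - 1) ≠ 0 := by
  have hm : (2, q - 1) ∈ G.pow (1, q - 1) 2 := by
    rw [h2]; right; rfl
  rw [pow_two] at hm
  obtain ⟨i, hi, j, hj, hp⟩ := hm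
  rw [Set.mem_singleton_iff] at hi hj
  rwa [hi, hj] at hp

lemma exD2 (h2 : G.pow (1, q - 1) 2 = ({(1, q - 2), (2, q - 1)} : Set (ℕ × ℕ))) :
    ∃ x y : V, tdist G.adj x y = (2, q - 1) := by
  obtain ⟨x, y, z, hxy, _, _⟩ := pnum_pair_exists G (pnumD2 h2)
  exact ⟨x, y, hxy⟩

lemma alpha1 (h2 : G.pow (1, q - 1) 2 = ({(1, q - 2), (2, q - 1)} : Set (ℕ × ℕ)))
    {x w z : V} (hxw : tdist G.adj x w = (1, q - 1)) (hwz : tdist G.adj w z = (1, q - 1)) :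
    tdist G.adj x z = (1, q - 2) ∨ tdist G.adj x z = (2, q - 1) := by
  have hp := pnum_ne_zero G hxw hwz
  have hm : tdist G.adj x z ∈ G.pow (1, q - 1) 2 := by
    rw [pow_two]
    exact ⟨(1, q - 1), rfl, (1, q - 1), rfl, hp⟩
  rw [h2] at hm
  exact hm

lemma na_nonempty (hC : G.Cexists q) (x : V) : ∃ z, tdist G.adj x z = (1, q - 1) := by
  obtain ⟨x₀, z₀, h⟩ := exA hC
  exact attained_nonempty G h x

lemma nb_nonempty (hC : G.Cexists q) (x : V) : ∃ z, tdist G.adj x z = (1, q - 2) := by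
  obtain ⟨x₀, z₀, h⟩ := exB hC
  exact attained_nonempty G h x

lemma nd2_nonempty (h2 : G.pow (1, q - 1) 2 = ({(1, q - 2), (2, q - 1)} : Set (ℕ × ℕ)))
    (x : V) : ∃ z, tdist G.adj x z = (2, q - 1) := by
  obtain ⟨x₀, z₀, h⟩ := exD2 h2
  exact attained_nonempty G h x

lemma bexpand (hC : G.Cexists q) {u v : V} (h : tdist G.adj u v = (1, q - 2)) :
    ∃ w, tdist G.adj u w = (1, q - 1) ∧ tdist G.adj w v = (1, q - 1) :=
  mid_exists G hC.1 h

lemma d2expand (h2 : G.pow (1, q - 1) 2 = ({(1, q - 2), (2, q - 1)} : Set (ℕ × ℕ)))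
    {u v : V} (h : tdist G.adj u v = (2, q - 1)) :
    ∃ w, tdist G.adj u w = (1, q - 1) ∧ tdist G.adj w v = (1, q - 1) :=
  mid_exists G (pnumD2 h2) h

lemma bwex (hC : G.Cexists q) (x : V) (n : ℕ) : ∃ b, RW G.adj (1, q - 2) n x b := by
  induction n with
  | zero => exact ⟨x, rfl⟩
  | succ n ih =>
    obtain ⟨b, hb⟩ := ih
    obtain ⟨c, hc⟩ := nb_nonempty hC b
    exact ⟨c, b, hb, hc⟩

lemma awofbw (hC : G.Cexists q) {n : ℕ} {x y : V} (h : RW G.adj (1, q - 2) n x y) :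
    RW G.adj (1, q - 1) (2 * n) x y := by
  induction n generalizing y with
  | zero => exact h
  | succ n ih =>
    obtain ⟨w, hw, hwc⟩ := h
    obtain ⟨u, hu1, hu2⟩ := bexpand hC hwc
    have h2step : RW G.adj (1, q - 1) 2 w y := ⟨u, rw_single hu1, hu2⟩
    have := rw_comp (ih hw) h2step
    rwa [show 2 * (n + 1) = 2 * n + 2 by ring]

lemma rw_trans (G : CTWDR V) (c : ℕ × ℕ) : ∀ (n : ℕ) (x₀ y₀ x y : V),
    RW G.adj c n x₀ y₀ → tdist G.adj x y = tdist G.adj x₀ y₀ → RW G.adj c n x y := by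
  intro n
  induction n with
  | zero =>
    intro x₀ y₀ x y h he
    rw [rw_zero] at h
    subst h
    rw [tdist_self] at he
    exact (eq_of_ddist_eq_zero G.strong (tdist_fst he)).symm ▸ rw_zero.mpr rfl
  | succ n ih =>
    intro x₀ y₀ x y h he
    obtain ⟨w₀, hw₀, hc₀⟩ := h
    have hp : pnum G.adj (tdist G.adj x₀ y₀) (tdist G.adj x₀ w₀) c ≠ 0 :=
      pnum_ne_zero G rfl hc₀
    obtain ⟨w, hw1, hw2⟩ := mid_exists G hp he
    exact ⟨w, ih x₀ w₀ x w hw₀ hw1, hw2⟩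

end Context

end StmtAux

namespace StmtAux

variable {V : Type*} [Fintype V] {G : CTWDR V} {q : ℕ}

section Purity

/-- Purity applied to a concatenated circuit: a `B`-walk followed by an `adj`-walk closing
a circuit of length `q-1` forces all arcs of the second part to be of type `B`. -/
lemma pure_concat (hq : 3 ≤ q) (hC : G.Cexists q) {m k : ℕ} (hm : 1 ≤ m)
    (hmk : m + k = q - 1) {f₁ f₂ : ℕ → V} (hb : f₂ 0 = f₁ m)
    (h₁ : ∀ i < m, tdist G.adj (f₁ i) (f₁ (i + 1)) = (1, q - 2))
    (h₂ : ∀ i < k, G.adj (f₂ i) (f₂ (i + 1))) (hcl : f₂ k = f₁ 0) :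
    ∀ i < k, tdist G.adj (f₂ i) (f₂ (i + 1)) = (1, q - 2) := by
  have hq12 : q - 1 - 1 = q - 2 := by omega
  have hadj₁ : ∀ i < m, G.adj (f₁ i) (f₁ (i + 1)) := fun i hi =>
    adj_of_tdist_fst_one (h₁ i hi)
  have hcirc : IsCircuit G.adj (q - 1) (catF f₁ f₂ m) := by
    refine ⟨by omega, ?_, ?_⟩
    · rw [show q - 1 = m + k by omega, catF_right, hcl, catF_left hb (by omega)]
    · rw [show q - 1 = m + k by omega]
      exact catF_adj hb hadj₁ h₂
  have hBarc : ∃ i < q - 1, tdist G.adj (catF f₁ f₂ m i) (catF f₁ f₂ m (i + 1)) = (1, q - 1 - 1) := by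
    refine ⟨0, by omega, ?_⟩
    rw [catF_left hb (by omega), catF_left hb (by omega), hq12]
    exact h₁ 0 (by omega)
  have hall := hC.2 (catF f₁ f₂ m) hcirc hBarc
  intro i hi
  have := hall (m + i) (by omega)
  rw [catF_right, show m + i + 1 = m + (i + 1) by omega, catF_right, hq12] at this
  exact this

/-- The shortest return path of a pure pair `(x,y) ∈ Γ_{n,q-1-n}` (with a `B`-walk from
`x` to `y`) consists of `B`-arcs, with distance marks to `x`. -/
lemma ret (hq : 3 ≤ q) (hC : G.Cexists q) {n : ℕ} (h1 : 1 ≤ n) (hn : n ≤ q - 2)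
    {x y : V} (hBW : RW G.adj (1, q - 2) n x y)
    (hcls : tdist G.adj x y = (n, q - 1 - n)) :
    ∃ f : ℕ → V, f 0 = y ∧ f (q - 1 - n) = x ∧
      (∀ i < q - 1 - n, tdist G.adj (f i) (f (i + 1)) = (1, q - 2)) ∧
      (∀ i ≤ q - 1 - n, ddist G.adj (f i) x = q - 1 - n - i) := by
  have hyx : ddist G.adj y x = q - 1 - n := tdist_snd hcls
  obtain ⟨f, hf0, hfK, hfa, hfm⟩ := exists_sp G.strong y x
  rw [hyx] at hfK hfa hfm
  obtain ⟨g, hg0, hgn, hga⟩ := rw_to_f hBW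
  have hclasses : ∀ i < q - 1 - n, tdist G.adj (f i) (f (i + 1)) = (1, q - 2) := by
    apply pure_concat hq hC h1 (show n + (q - 1 - n) = q - 1 by omega)
      (by rw [hf0, hgn]) hga hfa (by rw [hfK, hg0])
  refine ⟨f, hf0, hfK, hclasses, ?_⟩
  intro i hi
  exact (hfm i hi).2

end Purity

section PC

/-- Pure powers: a `B`-walk of length `n ≤ q-2` realizes the two-way distance `(n, q-1-n)`. -/
lemma pc (hq : 3 ≤ q) (hC : G.Cexists q) : ∀ n, 1 ≤ n → n ≤ q - 2 →
    ∀ x b : V, RW G.adj (1, q - 2) n x b → tdist G.adj x b = (n, q - 1 - n) := by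
  intro n
  induction n with
  | zero => omega
  | succ n ih =>
    intro _ hn x b hBW
    rcases Nat.eq_zero_or_pos n with hn0 | hn1
    · subst hn0
      have := rw_one.mp hBW
      rw [this]
      have : q - 2 = q - 1 - 1 := by omega
      rw [this]
    · -- inductive step
      obtain ⟨w, hw, hwb⟩ := hBW
      have hxw : tdist G.adj x w = (n, q - 1 - n) := ih hn1 (by omega) x w hw
      obtain ⟨f, hf0, hfK, hfcls, hfm⟩ := ret hq hC hn1 (by omega) hw hxw
      set K := q - 1 - n with hK
      have hK2 : 2 ≤ K := by omega
      have harc0 : tdist G.adj w (f 1) = (1, q - 2) := by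
        have := hfcls 0 (by omega)
        rwa [hf0] at this
      have harc1 : tdist G.adj (f 1) (f 2) = (1, q - 2) := hfcls 1 (by omega)
      have hbs2 : tdist G.adj b (f 2) = (1, q - 2) := full' G harc0 harc1 hwb
      -- upper bound for ddist b x
      have hdbx_le : ddist G.adj b x ≤ K - 1 := by
        have h1 : ddist G.adj b (f 2) = 1 := tdist_fst hbs2
        have h2 : ddist G.adj (f 2) x = K - 2 := by
          have := hfm 2 (by omega); omega
        have := ddist_triangle G.strong b (f 2) x
        omega
      -- lower bound for ddist b x
      have hdbx_ge : q - 2 - n ≤ ddist G.adj b x := by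
        obtain ⟨b₁, hb₁, hb₁w⟩ := rw_head.mp (show RW G.adj (1, q - 2) (n + 1) x b from ⟨w, hw, hwb⟩)
        have h1 : ddist G.adj b₁ x = q - 2 := tdist_snd hb₁
        have h2 : ddist G.adj b₁ b ≤ n := rw_ddist_le rfl hb₁w
        have := ddist_triangle G.strong b₁ b x
        omega
      -- upper bound for ddist x b
      have hdxb_le : ddist G.adj x b ≤ n + 1 :=
        rw_ddist_le rfl (show RW G.adj (1, q - 2) (n + 1) x b from ⟨w, hw, hwb⟩)
      -- lower bound for ddist x b
      have hdxb_ge : n + 1 ≤ ddist G.adj x b := by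
        have h1 : ddist G.adj (f 2) b = q - 2 := tdist_snd hbs2
        have h2 : ddist G.adj (f 2) x = K - 2 := by
          have := hfm 2 (by omega); omega
        have := ddist_triangle G.strong (f 2) x b
        omega
      exact tdist_eq_of (by omega) (by omega)

end PC

end StmtAux

namespace StmtAux

variable {V : Type*} [Fintype V] {G : CTWDR V} {q : ℕ}

lemma cwalk (hq : 3 ≤ q) (hC : G.Cexists q) {n : ℕ} (h1 : 1 ≤ n) (hn : n ≤ q - 2)
    {x z : V} (hcls : tdist G.adj x z = (n, q - 1 - n)) : RW G.adj (1, q - 2) n x z := by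
  obtain ⟨b, hb⟩ := bwex hC x n
  have hxb := pc hq hC n h1 hn x b hb
  exact rw_trans G _ n x b x z hb (by rw [hcls, hxb])

/-- Lemma `β`: a pure pair followed by an `A`-arc. -/
lemma beta (hq : 3 ≤ q) (hC : G.Cexists q) {j : ℕ} (hj1 : 1 ≤ j) (hj : j ≤ q - 2)
    {x y z : V} (hBW : RW G.adj (1, q - 2) j x y) (hyz : tdist G.adj y z = (1, q - 1)) :
    tdist G.adj x z = (j + 1, q - (j + 1)) := by
  have hcls : tdist G.adj x y = (j, q - 1 - j) := pc hq hC j hj1 hj x y hBW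
  set K := q - 1 - j with hK
  have hK1 : 1 ≤ K := by omega
  obtain ⟨f, hf0, hfK, hfcls, hfm⟩ := ret hq hC hj1 hj hBW hcls
  have harc0 : tdist G.adj y (f 1) = (1, q - 2) := by
    have := hfcls 0 (by omega); rwa [hf0] at this
  have hzw2 : tdist G.adj z (f 1) = (1, q - 1) := full G hC.1 harc0 hyz
  rcases eq_or_lt_of_le hK1 with hK1' | hK2
  · -- K = 1, so f 1 = x
    rw [hK] at hK1'
    have hfx : f 1 = x := by rw [show (1:ℕ) = q - 1 - j from hK1', hfK]
    rw [hfx] at hzw2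
    have h1 : ddist G.adj z x = 1 := tdist_fst hzw2
    have h2 : ddist G.adj x z = q - 1 := tdist_snd hzw2
    exact tdist_eq_of (by omega) (by omega)
  · -- K ≥ 2
    have hK2' : 2 ≤ K := hK2
    have hdzx_le : ddist G.adj z x ≤ K := by
      have h1 : ddist G.adj z (f 1) = 1 := tdist_fst hzw2
      have h2 : ddist G.adj (f 1) x = K - 1 := by have := hfm 1 (by omega); omega
      have := ddist_triangle G.strong z (f 1) x
      omega
    have hdzx_ge : K - 1 ≤ ddist G.adj z x := by
      have h1 : ddist G.adj y x = K := tdist_snd hcls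
      have h2 : ddist G.adj y z = 1 := tdist_fst hyz
      have := ddist_triangle G.strong y z x
      omega
    -- exclude ddist z x = K - 1 by purity
    have hdzx : ddist G.adj z x = K := by
      rcases eq_or_lt_of_le hdzx_ge with hcontra | h
      · exfalso
        obtain ⟨g, hg0, hgE, hga, _⟩ := exists_sp G.strong z x
        rw [← hcontra] at hgE hga
        obtain ⟨g₁, hg₁0, hg₁n, hg₁a⟩ := rw_to_f hBW
        have hb0 : g 0 = (fun i => if i = 0 then y else z) 1 := by simp [hg0]
        have hw₂adj : ∀ i < 1 + (K - 1),
            G.adj (catF (fun i => if i = 0 then y else z) g 1 i)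
              (catF (fun i => if i = 0 then y else z) g 1 (i + 1)) := by
          apply catF_adj hb0 ?_ hga
          intro i hi
          have hi0 : i = 0 := by omega
          subst hi0
          simpa using adj_of_tdist_fst_one hyz
        have hpure := pure_concat hq hC hj1 (show j + (1 + (K - 1)) = q - 1 by omega)
          (show catF (fun i => if i = 0 then y else z) g 1 0 = g₁ j by
            rw [catF_left hb0 (by omega)]
            simpa using hg₁n.symm)
          hg₁a hw₂adj
          (show catF (fun i => if i = 0 then y else z) g 1 (1 + (K - 1)) = g₁ 0 by
            rw [catF_right, hgE, hg₁0])
        have harcyz := hpure 0 (by omega)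
        rw [catF_left hb0 (by omega)] at harcyz
        have h1' : catF (fun i => if i = 0 then y else z) g 1 (0 + 1) = z := by
          rw [show (0:ℕ) + 1 = 1 + 0 from rfl, catF_right, hg0]
        rw [h1'] at harcyz
        simp only [if_true, ite_true] at harcyz
        rw [hyz] at harcyz
        have : q - 1 = q - 2 := ((Prod.mk.injEq _ _ _ _).mp harcyz).2
        omega
      · omega
    have hdxz_le : ddist G.adj x z ≤ j + 1 := by
      have h1 : ddist G.adj x y = j := tdist_fst hcls
      have h2 : ddist G.adj y z = 1 := tdist_fst hyz
      have := ddist_triangle G.strong x y z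
      omega
    have hdxz_ge : j + 1 ≤ ddist G.adj x z := by
      have h1 : ddist G.adj (f 1) z = q - 1 := tdist_snd hzw2
      have h2 : ddist G.adj (f 1) x = K - 1 := by have := hfm 1 (by omega); omega
      have := ddist_triangle G.strong (f 1) x z
      omega
    exact tdist_eq_of (by omega) (by omega)

/-- Iterated sibling-shift: an `A`-walk of length `2n+1` puts every `B`-walk endpoint
`A`-adjacent to the target. -/
lemma key (hC : G.Cexists q) : ∀ (n : ℕ) (x z : V), RW G.adj (1, q - 1) (2 * n + 1) x z →
    ∀ b, RW G.adj (1, q - 2) n x b → tdist G.adj b z = (1, q - 1) := by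
  intro n
  induction n with
  | zero =>
    intro x z hw b hb
    have hb' : x = b := hb
    have := rw_one.mp hw
    rwa [hb'] at this
  | succ n ih =>
    intro x z hw b hb
    obtain ⟨v₁, hxv₁, hw₁⟩ := rw_head.mp (show RW G.adj (1, q - 1) ((2 * n + 2) + 1) x z by
      rwa [show (2 * n + 2) + 1 = 2 * (n + 1) + 1 by ring])
    obtain ⟨v₂, hv₁v₂, hw₂⟩ := rw_head.mp hw₁
    obtain ⟨v₃, hv₂v₃, hw₃⟩ := rw_head.mp hw₂
    obtain ⟨b₁, hxb₁, hb₁b⟩ := rw_head.mp hb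
    have hv₁b₁ : tdist G.adj v₁ b₁ = (1, q - 1) := full G hC.1 hxb₁ hxv₁
    have hb₁v₃ : tdist G.adj b₁ v₃ = (1, q - 1) := full' G hv₁v₂ hv₂v₃ hv₁b₁
    have hwb₁ : RW G.adj (1, q - 1) (2 * n + 1) b₁ z := rw_head.mpr ⟨v₃, hb₁v₃, hw₃⟩
    exact ih b₁ z hwb₁ b hb₁b

/-- Odd powers: an `A`-walk of length `2n+1` realizes `(n+1, q-(n+1))`. -/
lemma odd (hq : 3 ≤ q) (hC : G.Cexists q) {n : ℕ} (h1 : 1 ≤ n) (hn : n ≤ q - 2)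
    {x z : V} (hw : RW G.adj (1, q - 1) (2 * n + 1) x z) :
    tdist G.adj x z = (n + 1, q - (n + 1)) := by
  obtain ⟨b, hb⟩ := bwex hC x n
  have hbz := key hC n x z hw b hb
  exact beta hq hC h1 hn hb hbz

end StmtAux

namespace StmtAux

variable {V : Type*} [Fintype V] {G : CTWDR V} {q : ℕ}

/-- Even powers: an `A`-walk of length `2n` (`2 ≤ n ≤ q-2`) realizes `(n, q-1-n)` or
`(n+1, q-n)`. -/
lemma even (hq : 3 ≤ q) (hC : G.Cexists q)
    (h2 : G.pow (1, q - 1) 2 = ({(1, q - 2), (2, q - 1)} : Set (ℕ × ℕ)))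
    {n : ℕ} (hn2 : 2 ≤ n) (hn : n ≤ q - 2) {x z : V}
    (hw : RW G.adj (1, q - 1) (2 * n) x z) :
    tdist G.adj x z = (n, q - 1 - n) ∨ tdist G.adj x z = (n + 1, q - n) := by
  -- peel the last arc
  obtain ⟨v, hv, hvz⟩ := (show RW G.adj (1, q - 1) ((2 * (n - 1) + 1) + 1) x z by
    rwa [show (2 * (n - 1) + 1) + 1 = 2 * n by omega])
  -- every B-walk endpoint of length n-1 relates to z as B or D2
  have hall : ∀ b', RW G.adj (1, q - 2) (n - 1) x b' →
      tdist G.adj b' z = (1, q - 2) ∨ tdist G.adj b' z = (2, q - 1) := by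
    intro b' hb'
    have hbv : tdist G.adj b' v = (1, q - 1) := key hC (n - 1) x v hv b' hb'
    exact alpha1 h2 hbv hvz
  by_cases hBc : ∃ b', RW G.adj (1, q - 2) (n - 1) x b' ∧ tdist G.adj b' z = (1, q - 2)
  · -- some endpoint gives a B-arc: pure class C_n
    obtain ⟨b', hb', hbz⟩ := hBc
    left
    have : RW G.adj (1, q - 2) ((n - 1) + 1) x z := ⟨b', hb', hbz⟩
    have := pc hq hC n (by omega) hn x z (by rwa [show (n - 1) + 1 = n by omega] at this)
    exact this
  · right
    push_neg at hBc
    obtain ⟨b, hb⟩ := bwex hC x (n - 1)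
    have hbz : tdist G.adj b z = (2, q - 1) := by
      rcases hall b hb with h | h
      · exact absurd h (hBc b hb)
      · exact h
    have hxb : tdist G.adj x b = (n - 1, q - 1 - (n - 1)) := pc hq hC (n - 1) (by omega) (by omega) x b hb
    have hxb' : tdist G.adj x b = (n - 1, q - n) := by
      rwa [show q - 1 - (n - 1) = q - n by omega] at hxb
    -- lower bound d(z,x) ≥ q - n
    have hdzb : ddist G.adj z b = q - 1 := tdist_snd hbz
    have hdxb : ddist G.adj x b = n - 1 := tdist_fst hxb'
    have hdzx_ge : q - n ≤ ddist G.adj z x := by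
      have := ddist_triangle G.strong z x b
      omega
    -- return path via the pure cycle of (x,b)
    obtain ⟨f, hf0, hfK, hfcls, hfm⟩ := ret hq hC (n := n - 1) (by omega) (by omega) hb hxb
    have hKval : q - 1 - (n - 1) = q - n := by omega
    have hK2 : 2 ≤ q - 1 - (n - 1) := by omega
    have harc0 : tdist G.adj b (f 1) = (1, q - 2) := by
      have := hfcls 0 (by omega); rwa [hf0] at this
    have harc1 : tdist G.adj (f 1) (f 2) = (1, q - 2) := hfcls 1 (by omega)
    obtain ⟨a₁, ht₁a₁, ha₁t₂⟩ := bexpand hC harc1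
    obtain ⟨v', hbv'⟩ := na_nonempty hC b
    have hv't₁ : tdist G.adj v' (f 1) = (1, q - 1) := full G hC.1 harc0 hbv'
    have hv'z : tdist G.adj v' z = (1, q - 1) := full G (pnumD2 h2) hbz hbv'
    have hza₁ : tdist G.adj z a₁ = (1, q - 1) := full' G hv't₁ ht₁a₁ hv'z
    -- d(z,x) ≤ q - n
    have hdzx_le : ddist G.adj z x ≤ q - n := by
      have h1 : ddist G.adj z a₁ = 1 := tdist_fst hza₁
      have h2' : ddist G.adj a₁ (f 2) = 1 := tdist_fst ha₁t₂
      have h3 : ddist G.adj (f 2) x = q - 1 - (n - 1) - 2 := by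
        have := hfm 2 (by omega); omega
      have t1 := ddist_triangle G.strong z a₁ x
      have t2 := ddist_triangle G.strong a₁ (f 2) x
      omega
    have hdzx : ddist G.adj z x = q - n := by omega
    -- upper bound for l = d(x,z)
    have hdbz : ddist G.adj b z = 2 := tdist_fst hbz
    have hdxz_le : ddist G.adj x z ≤ n + 1 := by
      have := ddist_triangle G.strong x b z
      omega
    -- case analysis on l
    have hcases : ddist G.adj x z = n + 1 ∨ ddist G.adj x z = n ∨ ddist G.adj x z = n - 1
        ∨ ddist G.adj x z ≤ n - 2 := by omega
    rcases hcases with hl | hl | hl | hl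
    · exact tdist_eq_of hl hdzx
    · -- l = n : would be class E_n, contradiction via key
      exfalso
      have hxz : tdist G.adj x z = (n, q - n) := tdist_eq_of hl hdzx
      -- witness: an A-walk of length 2(n-1)+1 realizing E_n
      have hAW : RW G.adj (1, q - 1) (2 * (n - 1) + 1) x v' :=
        rw_succ.mpr ⟨b, awofbw hC hb, hbv'⟩
      have hxv' : tdist G.adj x v' = (n, q - n) := by
        have := odd hq hC (n := n - 1) (by omega) (by omega) hAW
        rwa [show n - 1 + 1 = n by omega] at this
      have hAWz : RW G.adj (1, q - 1) (2 * (n - 1) + 1) x z :=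
        rw_trans G _ _ x v' x z hAW (by rw [hxz, hxv'])
      have := key hC (n - 1) x z hAWz b hb
      rw [hbz] at this
      have : (2 : ℕ) = 1 := ((Prod.mk.injEq _ _ _ _).mp this).1
      omega
    · -- l = n - 1 : would be class C_{n-1}, contradiction via hall
      exfalso
      have hxz : tdist G.adj x z = (n - 1, q - n) := tdist_eq_of hl hdzx
      have hBWz : RW G.adj (1, q - 2) (n - 1) x z :=
        rw_trans G _ _ x b x z hb (by rw [hxz, hxb'])
      rcases hall z hBWz with h | h
      · rw [tdist_self] at h
        have : (0 : ℕ) = 1 := ((Prod.mk.injEq _ _ _ _).mp h).1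
        omega
      · rw [tdist_self] at h
        have : (0 : ℕ) = 2 := ((Prod.mk.injEq _ _ _ _).mp h).1
        omega
    · -- l ≤ n - 2 : impossible
      exfalso
      rcases eq_or_lt_of_le hn with hnq | hnq
      · -- n = q - 2, so f 2 = x
        have hft2 : f 2 = x := by
          rw [show (2 : ℕ) = q - 1 - (n - 1) by omega, hfK]
        rw [hft2] at ha₁t₂
        rcases alpha1 h2 hza₁ ha₁t₂ with h | h
        · have h1 := tdist_fst h
          rw [hdzx] at h1
          omega
        · have h1 := tdist_snd h
          rw [show ddist G.adj x z = ddist G.adj x z from rfl] at h1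
          omega
      · -- n ≤ q - 3, use the B-arc (f 2, f 3)
        have harc2 : tdist G.adj (f 2) (f 3) = (1, q - 2) := hfcls 2 (by omega)
        have h1 : ddist G.adj (f 3) (f 2) = q - 2 := tdist_snd harc2
        have h2' : ddist G.adj (f 3) x = q - 1 - (n - 1) - 3 := by
          have := hfm 3 (by omega); omega
        have h3 : ddist G.adj z (f 2) ≤ 2 := by
          have t1 := ddist_triangle G.strong z a₁ (f 2)
          have e1 : ddist G.adj z a₁ = 1 := tdist_fst hza₁
          have e2 : ddist G.adj a₁ (f 2) = 1 := tdist_fst ha₁t₂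
          omega
        have t2 := ddist_triangle G.strong (f 3) x (f 2)
        have t3 := ddist_triangle G.strong x z (f 2)
        omega

end StmtAux

namespace StmtAux

variable {V : Type*} [Fintype V] {G : CTWDR V} {q : ℕ}

lemma pow_succ' (G : CTWDR V) (c : ℕ × ℕ) {m : ℕ} (hm : 1 ≤ m) :
    G.pow c (m + 1) = G.prodS (G.pow c m) {c} := by
  match m, hm with
  | (k + 1), _ => rfl

lemma mem_pow {c : ℕ × ℕ} (hatt : ∃ x y : V, tdist G.adj x y = c) :
    ∀ m, 1 ≤ m → ∀ h : ℕ × ℕ,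
      (h ∈ G.pow c m ↔ ∃ x z : V, RW G.adj c m x z ∧ tdist G.adj x z = h) := by
  intro m
  induction m with
  | zero => omega
  | succ m ih =>
    intro _ h
    rcases Nat.eq_zero_or_pos m with hm0 | hm1
    · subst hm0
      show h ∈ G.pow c 1 ↔ _
      constructor
      · intro hmem
        have : h = c := hmem
        subst this
        obtain ⟨x, y, hxy⟩ := hatt
        exact ⟨x, y, rw_single hxy, hxy⟩
      · rintro ⟨x, z, hw, rfl⟩
        have := rw_one.mp hw
        show tdist G.adj x z ∈ ({c} : Set (ℕ × ℕ))
        rw [this]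
        rfl
    · rw [pow_succ' G c hm1]
      constructor
      · rintro ⟨g, hg, jj, hjj, hp⟩
        rw [Set.mem_singleton_iff] at hjj
        rw [hjj] at hp
        obtain ⟨x₀, y₀, hw₀, hg₀⟩ := (ih hm1 g).mp hg
        obtain ⟨x, y, w, hxy, hxw, hwy⟩ := pnum_pair_exists G hp
        have hwalk : RW G.adj c m x w := rw_trans G c m x₀ y₀ x w hw₀ (by rw [hxw, hg₀])
        exact ⟨x, y, ⟨w, hwalk, hwy⟩, hxy⟩
      · rintro ⟨x, y, ⟨w, hw', hwy⟩, rfl⟩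
        refine ⟨tdist G.adj x w, (ih hm1 _).mpr ⟨x, w, hw', rfl⟩, c, rfl, ?_⟩
        exact pnum_ne_zero G rfl hwy

/-- existence of an `E_{n+1}`-pair via a `B`-walk plus an `A`-arc -/
lemma exE (hq : 3 ≤ q) (hC : G.Cexists q) (x : V) {n : ℕ} (h1 : 1 ≤ n) (hn : n ≤ q - 2) :
    ∃ b w, RW G.adj (1, q - 2) n x b ∧ tdist G.adj b w = (1, q - 1) ∧
      tdist G.adj x w = (n + 1, q - (n + 1)) := by
  obtain ⟨b, hb⟩ := bwex hC x n
  obtain ⟨w, hbw⟩ := na_nonempty hC b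
  exact ⟨b, w, hb, hbw, beta hq hC h1 hn hb hbw⟩

/-- existence of a `D_{n+2}`-pair via a `B`-walk plus a `D₂`-step -/
lemma exDn (hq : 3 ≤ q) (hC : G.Cexists q)
    (h2 : G.pow (1, q - 1) 2 = ({(1, q - 2), (2, q - 1)} : Set (ℕ × ℕ)))
    (x : V) {n : ℕ} (h1 : 1 ≤ n) (hn : n + 1 ≤ q - 2) :
    ∃ b u, RW G.adj (1, q - 2) n x b ∧ tdist G.adj b u = (2, q - 1) ∧
      tdist G.adj x u = (n + 2, q - (n + 1)) := by
  obtain ⟨b, hb⟩ := bwex hC x n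
  obtain ⟨u, hbu⟩ := nd2_nonempty h2 b
  refine ⟨b, u, hb, hbu, ?_⟩
  obtain ⟨w, hw1, hw2⟩ := d2expand h2 hbu
  have hAW : RW G.adj (1, q - 1) (2 * (n + 1)) x u := by
    have := rw_comp (awofbw hC hb) (show RW G.adj (1, q - 1) 2 b u from ⟨w, rw_single hw1, hw2⟩)
    rwa [show 2 * n + 2 = 2 * (n + 1) by ring] at this
  have hxb : tdist G.adj x b = (n, q - 1 - n) := pc hq hC n h1 (by omega) x b hb
  have hdub : ddist G.adj u b = q - 1 := tdist_snd hbu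
  have hdxb : ddist G.adj x b = n := tdist_fst hxb
  have hdge : q - (n + 1) ≤ ddist G.adj u x := by
    have := ddist_triangle G.strong u x b
    omega
  rcases even hq hC h2 (n := n + 1) (by omega) hn hAW with h | h
  · exfalso
    have := tdist_snd h
    omega
  · rwa [show n + 1 + 1 = n + 2 by ring, show q - (n + 1) = q - (n + 1) from rfl] at h

/-- the pure power set -/
lemma powB_eq (hq : 3 ≤ q) (hC : G.Cexists q) {n : ℕ} (h1 : 1 ≤ n) (hn : n ≤ q - 2) :
    G.pow (1, q - 2) n = {((n : ℕ), q - 1 - n)} := by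
  obtain ⟨x₀, y₀, hatt⟩ := exB hC
  ext h
  rw [mem_pow ⟨x₀, y₀, hatt⟩ n h1 h, Set.mem_singleton_iff]
  constructor
  · rintro ⟨x, z, hw, rfl⟩
    exact pc hq hC n h1 hn x z hw
  · rintro rfl
    obtain ⟨b, hb⟩ := bwex hC x₀ n
    exact ⟨x₀, b, hb, pc hq hC n h1 hn x₀ b hb⟩

lemma powA_odd (hq : 3 ≤ q) (hC : G.Cexists q) {i : ℕ} (hi2 : 2 ≤ i) (hiq : i ≤ q - 1) :
    G.pow (1, q - 1) (2 * i - 1) = {((i : ℕ), q - i)} := by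
  obtain ⟨xA, yA, hattA⟩ := exA hC
  have hm : 1 ≤ 2 * i - 1 := by omega
  ext h
  rw [mem_pow ⟨xA, yA, hattA⟩ _ hm h, Set.mem_singleton_iff]
  have hlen : 2 * i - 1 = 2 * (i - 1) + 1 := by omega
  constructor
  · rintro ⟨x, z, hw, rfl⟩
    rw [hlen] at hw
    have := odd hq hC (n := i - 1) (by omega) (by omega) hw
    rwa [show i - 1 + 1 = i by omega] at this
  · rintro rfl
    obtain ⟨b, w, hb, hbw, hxw⟩ := exE hq hC xA (n := i - 1) (by omega) (by omega)
    refine ⟨xA, w, ?_, by rwa [show i - 1 + 1 = i by omega] at hxw⟩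
    rw [hlen]
    exact rw_succ.mpr ⟨b, awofbw hC hb, hbw⟩

lemma prodBA (hq : 3 ≤ q) (hC : G.Cexists q) {i : ℕ} (hi2 : 2 ≤ i) (hiq : i ≤ q - 1) :
    G.prodS (G.pow (1, q - 2) (i - 1)) {(1, q - 1)} = {((i : ℕ), q - i)} := by
  rw [powB_eq hq hC (by omega : 1 ≤ i - 1) (by omega : i - 1 ≤ q - 2)]
  ext h
  constructor
  · rintro ⟨g, hg, jj, hjj, hp⟩
    rw [Set.mem_singleton_iff] at hg hjj
    subst hg; subst hjj
    obtain ⟨x, y, w, hxy, hxw, hwy⟩ := pnum_pair_exists G hp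
    have hwalk : RW G.adj (1, q - 2) (i - 1) x w :=
      cwalk hq hC (by omega) (by omega) hxw
    have := beta hq hC (j := i - 1) (by omega) (by omega) hwalk hwy
    rw [Set.mem_singleton_iff, ← hxy, this]
    congr 1 <;> omega
  · rintro rfl
    obtain ⟨xA, yA, hattA⟩ := exA hC
    obtain ⟨b, w, hb, hbw, hxw⟩ := exE hq hC xA (n := i - 1) (by omega) (by omega)
    have hxb : tdist G.adj xA b = (i - 1, q - 1 - (i - 1)) :=
      pc hq hC (i - 1) (by omega) (by omega) xA b hb
    refine ⟨(i - 1, q - 1 - (i - 1)), rfl, (1, q - 1), rfl, ?_⟩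
    have hp := pnum_ne_zero G hxb hbw
    rwa [hxw, show i - 1 + 1 = i by omega] at hp

lemma powA_even (hq : 3 ≤ q) (hC : G.Cexists q)
    (h2 : G.pow (1, q - 1) 2 = ({(1, q - 2), (2, q - 1)} : Set (ℕ × ℕ)))
    {i : ℕ} (hi2 : 2 ≤ i) (hiq : i ≤ q - 2) :
    G.pow (1, q - 1) (2 * i) = ({((i : ℕ), q - i - 1), ((i : ℕ) + 1, q - i)} : Set (ℕ × ℕ)) := by
  obtain ⟨xA, yA, hattA⟩ := exA hC
  ext h
  rw [mem_pow ⟨xA, yA, hattA⟩ _ (by omega) h]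
  constructor
  · rintro ⟨x, z, hw, rfl⟩
    rcases even hq hC h2 hi2 hiq hw with hcls | hcls
    · left
      rw [hcls]
      show _ ∈ ({((i : ℕ), q - i - 1)} : Set (ℕ × ℕ))
      rw [Set.mem_singleton_iff]
      congr 1
      omega
    · right
      rw [hcls]
      rfl
  · intro hmem
    rcases hmem with hmem | hmem
    · -- realize C_i
      obtain ⟨b, hb⟩ := bwex hC xA i
      refine ⟨xA, b, awofbw hC hb, ?_⟩
      have := pc hq hC i (by omega) hiq xA b hb
      rw [this, hmem]
      congr 1
      omega
    · -- realize D_{i+1}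
      obtain ⟨b, u, hb, hbu, hxu⟩ := exDn hq hC h2 xA (n := i - 1) (by omega) (by omega)
      obtain ⟨w, hw1, hw2⟩ := d2expand h2 hbu
      refine ⟨xA, u, ?_, ?_⟩
      · have := rw_comp (awofbw hC hb) (show RW G.adj (1, q - 1) 2 b u from ⟨w, rw_single hw1, hw2⟩)
        rwa [show 2 * (i - 1) + 2 = 2 * i by omega] at this
      · rw [hxu, hmem]
        have e1 : i - 1 + 2 = i + 1 := by omega
        have e2 : q - (i - 1 + 1) = q - i := by omega
        rw [e1, e2]

lemma prodBA2 (hq : 3 ≤ q) (hC : G.Cexists q)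
    (h2 : G.pow (1, q - 1) 2 = ({(1, q - 2), (2, q - 1)} : Set (ℕ × ℕ)))
    {i : ℕ} (hi2 : 2 ≤ i) (hiq : i ≤ q - 2) :
    G.prodS (G.pow (1, q - 2) (i - 1)) (G.pow (1, q - 1) 2)
      = ({((i : ℕ), q - i - 1), ((i : ℕ) + 1, q - i)} : Set (ℕ × ℕ)) := by
  rw [powB_eq hq hC (by omega : 1 ≤ i - 1) (by omega : i - 1 ≤ q - 2), h2]
  ext h
  constructor
  · rintro ⟨g, hg, jj, hjj, hp⟩
    rw [Set.mem_singleton_iff] at hg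
    subst hg
    obtain ⟨x, y, w, hxy, hxw, hwy⟩ := pnum_pair_exists G hp
    have hwalk : RW G.adj (1, q - 2) (i - 1) x w :=
      cwalk hq hC (by omega) (by omega) hxw
    rcases hjj with hjj | hjj
    · -- j = B : gives C_i
      rw [hjj] at hwy
      left
      have hBW : RW G.adj (1, q - 2) i x y := by
        have : RW G.adj (1, q - 2) ((i - 1) + 1) x y := ⟨w, hwalk, hwy⟩
        rwa [show i - 1 + 1 = i by omega] at this
      have := pc hq hC i (by omega) hiq x y hBW
      rw [← hxy, this]
      show _ = ((i : ℕ), q - i - 1)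
      congr 1
      omega
    · -- j = D₂ : gives D_{i+1}
      rw [Set.mem_singleton_iff] at hjj
      rw [hjj] at hwy
      right
      obtain ⟨v, hv1, hv2⟩ := d2expand h2 hwy
      have hAW : RW G.adj (1, q - 1) (2 * i) x y := by
        have := rw_comp (awofbw hC hwalk)
          (show RW G.adj (1, q - 1) 2 w y from ⟨v, rw_single hv1, hv2⟩)
        rwa [show 2 * (i - 1) + 2 = 2 * i by omega] at this
      have hdyw : ddist G.adj y w = q - 1 := tdist_snd hwy
      have hdxw : ddist G.adj x w = i - 1 := tdist_fst hxw
      have hdge : q - i ≤ ddist G.adj y x := by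
        have := ddist_triangle G.strong y x w
        omega
      rcases even hq hC h2 hi2 hiq hAW with hcls | hcls
      · exfalso
        have := tdist_snd hcls
        omega
      · rw [← hxy, hcls]
        rfl
  · intro hmem
    rcases hmem with hmem | hmem
    · -- C_i realized with j = B
      obtain ⟨xA, yA, hattA⟩ := exA hC
      obtain ⟨b, hb⟩ := bwex hC xA (i - 1)
      obtain ⟨c, hbc⟩ := nb_nonempty hC b
      have hxb : tdist G.adj xA b = (i - 1, q - 1 - (i - 1)) :=
        pc hq hC (i - 1) (by omega) (by omega) xA b hb
      have hBW : RW G.adj (1, q - 2) i xA c := by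
        have : RW G.adj (1, q - 2) ((i - 1) + 1) xA c := ⟨b, hb, hbc⟩
        rwa [show i - 1 + 1 = i by omega] at this
      have hxc : tdist G.adj xA c = (i, q - 1 - i) := pc hq hC i (by omega) hiq xA c hBW
      refine ⟨(i - 1, q - 1 - (i - 1)), rfl, (1, q - 2), Or.inl rfl, ?_⟩
      have hp := pnum_ne_zero G hxb hbc
      rw [hxc] at hp
      have : ((i : ℕ), q - 1 - i) = h := by rw [hmem]; congr 1; omega
      rwa [this] at hp
    · -- D_{i+1} realized with j = D₂
      rw [Set.mem_singleton_iff] at hmem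
      obtain ⟨xA, yA, hattA⟩ := exA hC
      obtain ⟨b, u, hb, hbu, hxu⟩ := exDn hq hC h2 xA (n := i - 1) (by omega) (by omega)
      have hxb : tdist G.adj xA b = (i - 1, q - 1 - (i - 1)) :=
        pc hq hC (i - 1) (by omega) (by omega) xA b hb
      refine ⟨(i - 1, q - 1 - (i - 1)), rfl, (2, q - 1), Or.inr rfl, ?_⟩
      have hp := pnum_ne_zero G hxb hbu
      rw [hxu] at hp
      have : ((i : ℕ) - 1 + 2, q - (i - 1 + 1)) = h := by
        rw [hmem]
        congr 1 <;> omega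
      rwa [this] at hp

end StmtAux



/-- Lemma 2.6: if `C(q)` exists and `Γ_{1,q-1}^2 = {Γ_{1,q-2}, Γ_{2,q-1}}`,
then (i) `Γ_{1,q-1}^{2i-1} = Γ_{1,q-2}^{i-1}Γ_{1,q-1} = {Γ_{i,q-i}}` for `2 ≤ i ≤ q-1`, and
(ii) `Γ_{1,q-1}^{2i} = Γ_{1,q-2}^{i-1}Γ_{1,q-1}^2 = {Γ_{i,q-i-1}, Γ_{i+1,q-i}}` for `2 ≤ i ≤ q-2`. -/
theorem stmt7 {V : Type*} [Fintype V] (G : CTWDR V) (q : ℕ) (hC : G.Cexists q)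
    (h2 : G.pow (1, q - 1) 2 = ({(1, q - 2), (2, q - 1)} : Set (ℕ × ℕ))) :
    (∀ i, 2 ≤ i → i ≤ q - 1 →
      G.pow (1, q - 1) (2 * i - 1) = {(i, q - i)} ∧
      G.prodS (G.pow (1, q - 2) (i - 1)) {(1, q - 1)} = {(i, q - i)}) ∧
    (∀ i, 2 ≤ i → i ≤ q - 2 →
      G.pow (1, q - 1) (2 * i) = ({(i, q - i - 1), (i + 1, q - i)} : Set (ℕ × ℕ)) ∧
      G.prodS (G.pow (1, q - 2) (i - 1)) (G.pow (1, q - 1) 2)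
        = ({(i, q - i - 1), (i + 1, q - i)} : Set (ℕ × ℕ))) := by
  have hq : 3 ≤ q := StmtAux.q3 hC
  constructor
  · intro i hi2 hiq
    exact ⟨StmtAux.powA_odd hq hC hi2 hiq, StmtAux.prodBA hq hC hi2 hiq⟩
  · intro i hi2 hiq
    exact ⟨StmtAux.powA_even hq hC h2 hi2 hiq, StmtAux.prodBA2 hq hC h2 hi2 hiq⟩
end

section
/- Let Γ be a commutative thick weakly distance-regular digraph in which D(q) exists, i.e. p^{(1,q-1)}_{(1,q-2),(q-2,1)} ≠ 0 and (1,q-2) is pure. Then Γ_{1,q-1}^2 = {Γ_{2,q-2}} or Γ_{1,q-1}^2 = {Γ_{2,q-1}}. -/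
/-!
Common framework: commutative thick weakly distance-regular digraphs.
-/

variable {V : Type*}

/-! ### Auxiliary lemmas for the proof of Statement 8 -/

namespace Stmt8Aux

section WalkLemmas

variable {V : Type*} {adj : V → V → Prop} {x y z : V} {m n : ℕ}

lemma hasWalk_zero (adj : V → V → Prop) (x : V) : HasWalk adj x x 0 :=
  ⟨fun _ => x, rfl, rfl, fun i hi => absurd hi (Nat.not_lt_zero i)⟩

lemma hasWalk_one (h : adj x y) : HasWalk adj x y 1 :=
  ⟨fun i => if i = 0 then x else y, by simp, by simp, by
    intro i hi
    have : i = 0 := by omega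
    subst this
    simpa using h⟩

lemma hasWalk_concat (h1 : HasWalk adj x y m) (h2 : HasWalk adj y z n) :
    HasWalk adj x z (m + n) := by
  obtain ⟨f, hf0, hfm, hf⟩ := h1
  obtain ⟨g, hg0, hgn, hg⟩ := h2
  refine ⟨fun i => if i ≤ m then f i else g (i - m), by simp [hf0], ?_, ?_⟩
  · by_cases h : m + n ≤ m
    · have hn : n = 0 := by omega
      subst hn
      simp only [if_pos h]
      rw [show m + 0 = m from rfl, hfm, ← hg0, hgn]
    · simp only [if_neg h]
      rw [show m + n - m = n by omega, hgn]
  · intro i hi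
    by_cases hc1 : i + 1 ≤ m
    · simp only [if_pos (by omega : i ≤ m), if_pos hc1]
      exact hf i (by omega)
    · by_cases hc2 : i ≤ m
      · have him : i = m := by omega
        subst him
        simp only [if_pos le_rfl, if_neg hc1]
        rw [show i + 1 - i = 1 by omega, hfm, ← hg0]
        exact hg 0 (by omega)
      · simp only [if_neg hc2, if_neg hc1]
        rw [show i + 1 - m = (i - m) + 1 by omega]
        exact hg (i - m) (by omega)

lemma ddist_le_of_walk (h : HasWalk adj x y n) : ddist adj x y ≤ n :=
  Nat.sInf_le h

lemma hasWalk_ddist (hs : IsStrong adj) (x y : V) : HasWalk adj x y (ddist adj x y) :=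
  Nat.sInf_mem (hs x y)

lemma ddist_self (adj : V → V → Prop) (x : V) : ddist adj x x = 0 :=
  Nat.le_zero.mp (ddist_le_of_walk (hasWalk_zero adj x))

lemma eq_of_ddist_eq_zero (hs : IsStrong adj) (h : ddist adj x y = 0) : x = y := by
  have hw := hasWalk_ddist hs x y
  rw [h] at hw
  obtain ⟨f, h0, h1, _⟩ := hw
  rw [← h0, h1]

lemma adj_of_ddist_eq_one (hs : IsStrong adj) (h : ddist adj x y = 1) : adj x y := by
  have hw := hasWalk_ddist hs x y
  rw [h] at hw
  obtain ⟨f, h0, h1, ha⟩ := hw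
  have := ha 0 (by omega)
  rwa [h0, h1] at this

lemma ddist_triangle (hs : IsStrong adj) (x y z : V) :
    ddist adj x z ≤ ddist adj x y + ddist adj y z :=
  ddist_le_of_walk (hasWalk_concat (hasWalk_ddist hs x y) (hasWalk_ddist hs y z))

lemma tdist_fst {a b : ℕ} (h : tdist adj x y = (a, b)) : ddist adj x y = a :=
  congrArg Prod.fst h

lemma tdist_snd {a b : ℕ} (h : tdist adj x y = (a, b)) : ddist adj y x = b :=
  congrArg Prod.snd h

lemma tdist_mk {a b : ℕ} (h1 : ddist adj x y = a) (h2 : ddist adj y x = b) :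
    tdist adj x y = (a, b) := by
  unfold tdist
  rw [h1, h2]

lemma tdist_rev (adj : V → V → Prop) (x y : V) : tdist adj y x = (tdist adj x y).swap := rfl

lemma tdist_self (adj : V → V → Prop) (x : V) : tdist adj x x = (0, 0) := by
  unfold tdist
  rw [ddist_self]

end WalkLemmas

section PnumLemmas

variable {V : Type*} [Fintype V] (G : CTWDR V)

lemma pnum_eval {h : ℕ × ℕ} {x y : V} (hxy : tdist G.adj x y = h) (i j : ℕ × ℕ) :
    pnum G.adj h i j = Set.ncard {z : V | tdist G.adj x z = i ∧ tdist G.adj z y = j} := by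
  unfold pnum
  have hset : {n | ∃ x' y' : V, tdist G.adj x' y' = h ∧
      n = Set.ncard {z : V | tdist G.adj x' z = i ∧ tdist G.adj z y' = j}}
      = {Set.ncard {z : V | tdist G.adj x z = i ∧ tdist G.adj z y = j}} := by
    ext n
    simp only [Set.mem_setOf_eq, Set.mem_singleton_iff]
    constructor
    · rintro ⟨x', y', hxy', rfl⟩
      exact G.wdr i j x' y' x y (hxy'.trans hxy.symm)
    · rintro rfl
      exact ⟨x, y, hxy, rfl⟩
  rw [hset, csSup_singleton]

lemma exists_of_pnum_ne_zero {h i j : ℕ × ℕ} (hp : pnum G.adj h i j ≠ 0) :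
    ∃ x y z : V, tdist G.adj x y = h ∧ tdist G.adj x z = i ∧ tdist G.adj z y = j := by
  have hne : {n | ∃ x y : V, tdist G.adj x y = h ∧
      n = Set.ncard {z : V | tdist G.adj x z = i ∧ tdist G.adj z y = j}}.Nonempty := by
    by_contra hc
    rw [Set.not_nonempty_iff_eq_empty] at hc
    apply hp
    unfold pnum
    rw [hc]
    exact csSup_empty
  obtain ⟨n, x, y, hxy, -⟩ := hne
  rw [pnum_eval G hxy i j] at hp
  have : {z : V | tdist G.adj x z = i ∧ tdist G.adj z y = j}.Nonempty := by
    rw [Set.nonempty_iff_ne_empty]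
    intro hc
    apply hp
    rw [hc]
    simp
  obtain ⟨z, hz1, hz2⟩ := this
  exact ⟨x, y, z, hxy, hz1, hz2⟩

lemma pnum_ne_zero_of_witness {h i j : ℕ × ℕ} {x y z : V} (hxy : tdist G.adj x y = h)
    (hxz : tdist G.adj x z = i) (hzy : tdist G.adj z y = j) : pnum G.adj h i j ≠ 0 := by
  rw [pnum_eval G hxy i j]
  intro hc
  rw [Set.ncard_eq_zero (Set.toFinite _)] at hc
  exact absurd (hc ▸ (⟨hxz, hzy⟩ : z ∈ {z : V | tdist G.adj x z = i ∧ tdist G.adj z y = j}))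
    (Set.notMem_empty z)

lemma kval_eval (i : ℕ × ℕ) (v : V) :
    kval G.adj i = Set.ncard {w : V | tdist G.adj v w = i} := by
  unfold kval
  rw [pnum_eval G (tdist_self G.adj v) i i.swap]
  congr 1
  ext w
  simp only [Set.mem_setOf_eq]
  constructor
  · rintro ⟨h1, -⟩
    exact h1
  · intro h1
    refine ⟨h1, ?_⟩
    rw [tdist_rev, h1]

lemma exists_rel {e : ℕ × ℕ} {a b : V} (hab : tdist G.adj a b = e) (v : V) :
    ∃ w : V, tdist G.adj v w = e := by
  have h1 : 0 < kval G.adj e := by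
    rw [kval_eval G e a]
    rw [Set.ncard_pos (Set.toFinite _)]
    exact ⟨b, hab⟩
  rw [kval_eval G e v, Set.ncard_pos (Set.toFinite _)] at h1
  exact h1

lemma kval_pos {e : ℕ × ℕ} {a b : V} (hab : tdist G.adj a b = e) : 1 ≤ kval G.adj e := by
  rw [kval_eval G e a]
  have : 0 < Set.ncard {w : V | tdist G.adj a w = e} := by
    rw [Set.ncard_pos (Set.toFinite _)]
    exact ⟨b, hab⟩
  omega

/-- The key consequence of thickness: a nonvanishing intersection number of shape
`p^h_{i,i}` or `p^h_{i,i*}` is "complete": for every pair of type `h`, *every* `z` in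
relation `i` to `x` is in relation `j` to `y`. -/
lemma thick_transfer {h i j : ℕ × ℕ} (hij : j = i ∨ j = i.swap)
    (hp : pnum G.adj h i j ≠ 0) {x y z : V} (hxy : tdist G.adj x y = h)
    (hxz : tdist G.adj x z = i) : tdist G.adj z y = j := by
  have hk : pnum G.adj h i j = kval G.adj i := by
    rcases hij with hji | hji
    · rw [hji] at hp ⊢
      exact (G.thick h i).1.resolve_left hp
    · rw [hji] at hp ⊢
      exact (G.thick h i).2.resolve_left hp
  have heval := pnum_eval G hxy i j
  have hkv := kval_eval G i x
  have hsub : {z' : V | tdist G.adj x z' = i ∧ tdist G.adj z' y = j}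
      ⊆ {w : V | tdist G.adj x w = i} := fun _ hz => hz.1
  have hcard : Set.ncard {w : V | tdist G.adj x w = i}
      ≤ Set.ncard {z' : V | tdist G.adj x z' = i ∧ tdist G.adj z' y = j} := by
    rw [← heval, hk, hkv]
  have heq := Set.eq_of_subset_of_ncard_le hsub hcard (Set.toFinite _)
  have : z ∈ {z' : V | tdist G.adj x z' = i ∧ tdist G.adj z' y = j} := by
    rw [heq]
    exact hxz
  exact this.2

lemma pnum_comm_ne_zero {h i j : ℕ × ℕ} (hp : pnum G.adj h i j ≠ 0) :
    pnum G.adj h j i ≠ 0 := by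
  obtain ⟨x, y, z, hxy, -, -⟩ := exists_of_pnum_ne_zero G hp
  rw [pnum_eval G hxy i j] at hp
  rw [pnum_eval G hxy j i, ← G.comm i j x y]
  exact hp

end PnumLemmas

end Stmt8Aux

open Stmt8Aux in
/-- Lemma 2.7: if `D(q)` exists, then
`Γ_{1,q-1}^2 = {Γ_{2,q-2}}` or `Γ_{1,q-1}^2 = {Γ_{2,q-1}}`. -/
theorem stmt8 {V : Type*} [Fintype V] (G : CTWDR V) (q : ℕ) (hD : G.Dexists q) :
    G.pow (1, q - 1) 2 = {(2, q - 2)} ∨ G.pow (1, q - 1) 2 = {(2, q - 1)} := by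
  obtain ⟨hpD, -⟩ := hD
  -- basic witnesses from D(q)
  obtain ⟨x0, y0, z0, hx0y0, hx0z0, hz0y0⟩ := exists_of_pnum_ne_zero G hpD
  -- q ≥ 3
  have hq : 3 ≤ q := by
    by_contra hq'
    have h2 : q - 2 = 0 := by omega
    rw [h2] at hx0z0
    have hz0x0 : ddist G.adj z0 x0 = 0 := tdist_snd hx0z0
    have hzx : z0 = x0 := eq_of_ddist_eq_zero G.strong hz0x0
    have h1 : ddist G.adj x0 z0 = 1 := tdist_fst hx0z0
    rw [hzx, ddist_self] at h1
    omega
  -- `pnum I Ds D ≠ 0` via commutativity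
  have hpD' : pnum G.adj (1, q - 1) (q - 2, 1) (1, q - 2) ≠ 0 := pnum_comm_ne_zero G hpD
  -- Δ-out transfer along ĩ-arcs
  have stepA : ∀ {a b c : V}, tdist G.adj a b = (1, q - 1) →
      tdist G.adj a c = (1, q - 2) → tdist G.adj b c = (1, q - 2) := by
    intro a b c hab hac
    have hcb : tdist G.adj c b = (q - 2, 1) :=
      thick_transfer G (Or.inr rfl) hpD hab hac
    rw [tdist_rev, hcb]
    rfl
  -- Δ-in transfer along ĩ-arcs
  have stepB : ∀ {a b c : V}, tdist G.adj a b = (1, q - 1) →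
      tdist G.adj c a = (1, q - 2) → tdist G.adj c b = (1, q - 2) := by
    intro a b c hab hca
    have hac : tdist G.adj a c = (q - 2, 1) := by
      rw [tdist_rev, hca]
      rfl
    exact thick_transfer G (Or.inr rfl) hpD' hab hac
  -- Δ-in set equality along ĩ-arcs
  have stepBeq : ∀ {a b : V}, tdist G.adj a b = (1, q - 1) →
      {c : V | tdist G.adj c a = (1, q - 2)} = {c : V | tdist G.adj c b = (1, q - 2)} := by
    intro a b hab
    have hsub : {c : V | tdist G.adj c a = (1, q - 2)}
        ⊆ {c : V | tdist G.adj c b = (1, q - 2)} := fun c hc => stepB hab hc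
    have hre : ∀ v : V, {c : V | tdist G.adj c v = (1, q - 2)}
        = {c : V | tdist G.adj v c = (q - 2, 1)} := by
      intro v
      ext c
      simp only [Set.mem_setOf_eq]
      constructor
      · intro hcv
        rw [tdist_rev, hcv]
        rfl
      · intro hvc
        rw [tdist_rev, hvc]
        rfl
    refine Set.eq_of_subset_of_ncard_le hsub ?_ (Set.toFinite _)
    rw [hre a, hre b, ← kval_eval G _ a, ← kval_eval G _ b]
  -- existence of partners
  have exI : ∀ v : V, ∃ u : V, tdist G.adj v u = (1, q - 1) := exists_rel G hx0y0
  have exD : ∀ v : V, ∃ z : V, tdist G.adj v z = (1, q - 2) := exists_rel G hx0z0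
  -- membership in the square
  have hpow : ∀ h : ℕ × ℕ, h ∈ G.pow (1, q - 1) 2 ↔
      pnum G.adj h (1, q - 1) (1, q - 1) ≠ 0 := by
    intro h
    show h ∈ G.prodS (G.pow (1, q - 1) 1) {(1, q - 1)} ↔ _
    constructor
    · rintro ⟨i, hi, j, hj, hne⟩
      have hi' : i = (1, q - 1) := hi
      have hj' : j = (1, q - 1) := hj
      rw [hi', hj'] at hne
      exact hne
    · intro hne
      exact ⟨(1, q - 1), rfl, (1, q - 1), rfl, hne⟩
  -- STEP 4: the square is contained in {(2,q-2), (2,q-1)}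
  have step4 : ∀ h : ℕ × ℕ, pnum G.adj h (1, q - 1) (1, q - 1) ≠ 0 →
      h = (2, q - 2) ∨ h = (2, q - 1) := by
    intro h hh
    obtain ⟨x, w, u, hxw, hxu, huw⟩ := exists_of_pnum_ne_zero G hh
    have dxu : ddist G.adj x u = 1 := tdist_fst hxu
    have dux : ddist G.adj u x = q - 1 := tdist_snd hxu
    have duw : ddist G.adj u w = 1 := tdist_fst huw
    have dxw2 : ddist G.adj x w ≤ 2 := by
      have := ddist_triangle G.strong x u w
      omega
    have dxw0 : ddist G.adj x w ≠ 0 := by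
      intro h0
      have hxweq : x = w := eq_of_ddist_eq_zero G.strong h0
      rw [← hxweq] at duw
      have : (1 : ℕ) = q - 1 := duw.symm.trans dux
      omega
    obtain ⟨z, hxz⟩ := exD x
    have huz : tdist G.adj u z = (1, q - 2) := stepA hxu hxz
    have hwz : tdist G.adj w z = (1, q - 2) := stepA huw huz
    have dwz : ddist G.adj w z = 1 := tdist_fst hwz
    have dzx : ddist G.adj z x = q - 2 := tdist_snd hxz
    have dwx_ub : ddist G.adj w x ≤ q - 1 := by
      have := ddist_triangle G.strong w z x
      omega
    have dwx_lb : q - 2 ≤ ddist G.adj w x := by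
      have := ddist_triangle G.strong u w x
      omega
    have dxw1 : ddist G.adj x w ≠ 1 := by
      intro h1
      rcases (by omega : ddist G.adj w x = q - 2 ∨ ddist G.adj w x = q - 1) with ht | ht
      · have hxwD : tdist G.adj x w = (1, q - 2) := tdist_mk h1 ht
        have huwD : tdist G.adj u w = (1, q - 2) := stepA hxu hxwD
        have := huw.symm.trans huwD
        simp only [Prod.mk.injEq] at this
        omega
      · have hxwI : tdist G.adj x w = (1, q - 1) := tdist_mk h1 ht
        have hhI : h = (1, q - 1) := hxw.symm.trans hxwI
        rw [hhI] at hh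
        have hww := thick_transfer G (Or.inl rfl) hh hxwI hxwI
        rw [tdist_self] at hww
        simp only [Prod.mk.injEq] at hww
        omega
    have dxw : ddist G.adj x w = 2 := by omega
    rw [← hxw]
    rcases (by omega : ddist G.adj w x = q - 2 ∨ ddist G.adj w x = q - 1) with ht | ht
    · exact Or.inl (tdist_mk dxw ht)
    · exact Or.inr (tdist_mk dxw ht)
  -- STEP 5: the square is nonempty
  have step5 : ∃ h : ℕ × ℕ, pnum G.adj h (1, q - 1) (1, q - 1) ≠ 0 := by
    obtain ⟨u, hu⟩ := exI x0
    obtain ⟨w, hw⟩ := exI u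
    exact ⟨tdist G.adj x0 w, pnum_ne_zero_of_witness G rfl hu hw⟩
  -- STEP 6: not both
  have step6 : ¬ (pnum G.adj (2, q - 2) (1, q - 1) (1, q - 1) ≠ 0 ∧
      pnum G.adj (2, q - 1) (1, q - 1) (1, q - 1) ≠ 0) := by
    rintro ⟨hh1, hh2⟩
    obtain ⟨a2, b2, c2, hab2, -, -⟩ := exists_of_pnum_ne_zero G hh2
    have kv2 : 1 ≤ kval G.adj (2, q - 1) := kval_pos G hab2
    obtain ⟨x, w1, u, hxw1, hxu, huw1⟩ := exists_of_pnum_ne_zero G hh1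
    -- every ĩ-out-neighbour of x is an ĩ-in-neighbour of w1
    have hb : ∀ u' : V, tdist G.adj x u' = (1, q - 1) → tdist G.adj u' w1 = (1, q - 1) :=
      fun u' hu' => thick_transfer G (Or.inl rfl) hh1 hxw1 hu'
    -- kval (2,q-2) < kval (1,q-1)
    have hc : kval G.adj (2, q - 2) < kval G.adj (1, q - 1) := by
      have hsub1 : {v : V | tdist G.adj x v = (2, q - 2)}
          ⊆ {v : V | tdist G.adj u v = (1, q - 1)} :=
        fun v hv => thick_transfer G (Or.inl rfl) hh1 hv hxu
      have hsub2 : {v : V | tdist G.adj x v = (2, q - 1)}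
          ⊆ {v : V | tdist G.adj u v = (1, q - 1)} :=
        fun v hv => thick_transfer G (Or.inl rfl) hh2 hv hxu
      have hdisj : Disjoint {v : V | tdist G.adj x v = (2, q - 2)}
          {v : V | tdist G.adj x v = (2, q - 1)} := by
        rw [Set.disjoint_left]
        intro v hv1 hv2
        rw [Set.mem_setOf_eq] at hv1 hv2
        have := hv1.symm.trans hv2
        simp only [Prod.mk.injEq] at this
        omega
      have hcard := Set.ncard_le_ncard (Set.union_subset hsub1 hsub2) (Set.toFinite _)
      rw [Set.ncard_union_eq hdisj (Set.toFinite _) (Set.toFinite _)] at hcard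
      rw [← kval_eval G _ x, ← kval_eval G _ x, ← kval_eval G _ u] at hcard
      omega
    -- the geodesic from w1 to x
    have dw1x : ddist G.adj w1 x = q - 2 := tdist_snd hxw1
    obtain ⟨f, hf0, hflast, hfadj⟩ : HasWalk G.adj w1 x (q - 2) := by
      rw [← dw1x]
      exact hasWalk_ddist G.strong w1 x
    have hwalk_pre : HasWalk G.adj w1 (f (q - 3)) (q - 3) :=
      ⟨f, hf0, rfl, fun i hi => hfadj i (by omega)⟩
    have hadj_dx : G.adj (f (q - 3)) x := by
      have := hfadj (q - 3) (by omega)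
      rwa [show q - 3 + 1 = q - 2 by omega, hflast] at this
    have ddx_le : ddist G.adj (f (q - 3)) x ≤ 1 := ddist_le_of_walk (hasWalk_one hadj_dx)
    have dw1d_le : ddist G.adj w1 (f (q - 3)) ≤ q - 3 := ddist_le_of_walk hwalk_pre
    have ddx : ddist G.adj (f (q - 3)) x = 1 := by
      by_contra hne
      have h0 : ddist G.adj (f (q - 3)) x = 0 := by omega
      have hdx : f (q - 3) = x := eq_of_ddist_eq_zero G.strong h0
      rw [hdx] at dw1d_le
      omega
    have dw1d : ddist G.adj w1 (f (q - 3)) = q - 3 := by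
      have := ddist_triangle G.strong w1 (f (q - 3)) x
      omega
    by_cases hcase : tdist G.adj (f (q - 3)) x = (1, q - 2)
    · -- penultimate vertex is a Δ-in-neighbour of x, hence of w1: contradiction
      have h1 : tdist G.adj (f (q - 3)) u = (1, q - 2) := stepB hxu hcase
      have h2 : tdist G.adj (f (q - 3)) w1 = (1, q - 2) := stepB huw1 h1
      have := tdist_snd h2
      omega
    · -- otherwise every ĩ-out-neighbour of x is an (2,q-2)-partner of the penultimate vertex
      have hforall : ∀ u' : V, tdist G.adj x u' = (1, q - 1) →
          tdist G.adj (f (q - 3)) u' = (2, q - 2) := by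
        intro u' hu'
        have du'w1 : ddist G.adj u' w1 = 1 := tdist_fst (hb u' hu')
        have du'x : ddist G.adj u' x = q - 1 := tdist_snd hu'
        have hxu'1 : ddist G.adj x u' = 1 := tdist_fst hu'
        have hW : HasWalk G.adj u' (f (q - 3)) (1 + (q - 3)) :=
          hasWalk_concat (hasWalk_one (adj_of_ddist_eq_one G.strong du'w1)) hwalk_pre
        have du'd_le : ddist G.adj u' (f (q - 3)) ≤ q - 2 := by
          have := ddist_le_of_walk hW
          omega
        have du'd_ge : q - 2 ≤ ddist G.adj u' (f (q - 3)) := by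
          have := ddist_triangle G.strong u' (f (q - 3)) x
          omega
        have du'd : ddist G.adj u' (f (q - 3)) = q - 2 := le_antisymm du'd_le du'd_ge
        have hW2 : HasWalk G.adj (f (q - 3)) u' (1 + 1) :=
          hasWalk_concat (hasWalk_one hadj_dx)
            (hasWalk_one (adj_of_ddist_eq_one G.strong hxu'1))
        have ddu'_le : ddist G.adj (f (q - 3)) u' ≤ 2 := ddist_le_of_walk hW2
        have ddu'_ne0 : ddist G.adj (f (q - 3)) u' ≠ 0 := by
          intro h0
          have hdu : f (q - 3) = u' := eq_of_ddist_eq_zero G.strong h0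
          rw [hdu, ddist_self] at du'd
          omega
        have ddu'_ne1 : ddist G.adj (f (q - 3)) u' ≠ 1 := by
          intro h1
          have hD' : tdist G.adj (f (q - 3)) u' = (1, q - 2) := tdist_mk h1 du'd
          have hmem : f (q - 3) ∈ {c : V | tdist G.adj c u' = (1, q - 2)} := hD'
          rw [← stepBeq hu'] at hmem
          exact hcase hmem
        have ddu' : ddist G.adj (f (q - 3)) u' = 2 := by omega
        exact tdist_mk ddu' du'd
      have hsub : {v : V | tdist G.adj x v = (1, q - 1)}
          ⊆ {v : V | tdist G.adj (f (q - 3)) v = (2, q - 2)} :=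
        fun u' hu' => hforall u' hu'
      have hle := Set.ncard_le_ncard hsub (Set.toFinite _)
      rw [← kval_eval G _ x, ← kval_eval G _ (f (q - 3))] at hle
      omega
  -- final assembly
  by_cases hm1 : pnum G.adj (2, q - 2) (1, q - 1) (1, q - 1) ≠ 0
  · left
    ext h
    rw [hpow h, Set.mem_singleton_iff]
    constructor
    · intro hh
      rcases step4 h hh with h1 | h2
      · exact h1
      · exact absurd ⟨hm1, h2 ▸ hh⟩ step6
    · rintro rfl
      exact hm1
  · right
    push_neg at hm1
    ext h
    rw [hpow h, Set.mem_singleton_iff]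
    constructor
    · intro hh
      rcases step4 h hh with h1 | h2
      · rw [h1] at hh
        exact absurd hm1 hh
      · exact h2
    · rintro rfl
      obtain ⟨h', hh'⟩ := step5
      rcases step4 h' hh' with h1 | h2
      · rw [h1] at hh'
        exact absurd hm1 hh'
      · rw [h2] at hh'
        exact hh'
end

section
/- Let Γ be a commutative thick weakly distance-regular digraph and J ⊆ T = {t : (1,t-1) ∈ ∂̃(Γ)}. Let Δ_J be the subdigraph on the block F_J(x) (the minimum closed subset generated by {Γ_{1,t-1}}_{t∈J}, applied at x) with arcs ∪_{t∈J} Γ_{1,t-1}. If for all vertices x,y,x',y' of Δ_J with ∂̃_{Δ_J}(x,y) = ∂̃_{Δ_J}(x',y') one has ∂_Γ(x,y) = ∂_Γ(x',y'), then Δ_J is a thick weakly distance-regular digraph. -/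
/-!
Common framework: commutative thick weakly distance-regular digraphs.
-/

variable {V : Type*}

section Walks

variable {W : Type*} {adj : W → W → Prop}

lemma hasWalk_refl (x : W) : HasWalk adj x x 0 :=
  ⟨fun _ => x, rfl, rfl, fun i hi => absurd hi (Nat.not_lt_zero i)⟩

lemma hasWalk_zero {x y : W} (h : HasWalk adj x y 0) : x = y := by
  obtain ⟨f, h0, hn, -⟩ := h; rw [← h0, hn]

lemma hasWalk_single {x y : W} (h : adj x y) : HasWalk adj x y 1 := by
  refine ⟨fun i => if i = 0 then x else y, by simp, by simp, ?_⟩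
  intro i hi
  interval_cases i
  simpa using h

lemma hasWalk_front {x y : W} {n : ℕ} (h : HasWalk adj x y (n + 1)) :
    ∃ w, adj x w ∧ HasWalk adj w y n := by
  obtain ⟨f, h0, hn, ha⟩ := h
  refine ⟨f 1, h0 ▸ ha 0 (Nat.succ_pos n), fun i => f (i + 1), rfl, hn, fun i hi => ?_⟩
  exact ha (i + 1) (by omega)

lemma hasWalk_front' {x y w : W} {n : ℕ} (h1 : adj x w) (h2 : HasWalk adj w y n) :
    HasWalk adj x y (n + 1) := by
  obtain ⟨f, h0, hn, ha⟩ := h2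
  refine ⟨fun i => if i = 0 then x else f (i - 1), by simp, by simp [hn], ?_⟩
  intro i hi
  rcases Nat.eq_zero_or_pos i with rfl | hpos
  · simpa [h0] using h1
  · have h1i : ¬ (i = 0) := by omega
    have h2i : ¬ (i + 1 = 0) := by omega
    simp only [h1i, h2i, if_false]
    have : i - 1 + 1 = i + 1 - 1 := by omega
    rw [this] at *
    have := ha (i - 1) (by omega)
    have e : i - 1 + 1 = i + 1 - 1 := by omega
    rw [e] at this
    exact this

lemma hasWalk_back {x y : W} {n : ℕ} (h : HasWalk adj x y (n + 1)) :
    ∃ w, HasWalk adj x w n ∧ adj w y := by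
  obtain ⟨f, h0, hn, ha⟩ := h
  exact ⟨f n, ⟨f, h0, rfl, fun i hi => ha i (by omega)⟩, hn ▸ ha n (by omega)⟩

lemma hasWalk_back' {x y w : W} {n : ℕ} (h1 : HasWalk adj x w n) (h2 : adj w y) :
    HasWalk adj x y (n + 1) := by
  obtain ⟨f, h0, hn, ha⟩ := h1
  refine ⟨fun i => if i ≤ n then f i else y, by simp [h0], by simp, ?_⟩
  intro i hi
  by_cases hin : i + 1 ≤ n
  · have hle : i ≤ n := by omega
    simp only [hin, hle, if_true]
    exact ha i (by omega)
  · have hi' : i = n := by omega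
    have h1 : ¬ (n + 1 ≤ n) := by omega
    simp only [hi', le_refl, if_true, h1, if_false, hn]
    exact h2

lemma ddist_self (adj : W → W → Prop) (x : W) : ddist adj x x = 0 :=
  Nat.eq_zero_of_le_zero (Nat.sInf_le (hasWalk_refl x))

lemma tdist_self (adj : W → W → Prop) (x : W) : tdist adj x x = (0, 0) := by
  simp [tdist, ddist_self]

lemma tdist_swap (adj : W → W → Prop) (x y : W) :
    tdist adj y x = (tdist adj x y).swap := rfl

lemma ddist_eq_zero {x y : W} (hs : ∃ n, HasWalk adj x y n) (h : ddist adj x y = 0) :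
    x = y := by
  have := Nat.sInf_mem (s := {n | HasWalk adj x y n}) hs
  rw [show sInf {n | HasWalk adj x y n} = 0 from h] at this
  exact hasWalk_zero this

end Walks
section Pnum

variable {W : Type*} [Fintype W] {adj : W → W → Prop}

lemma pnum_eq (hw : IsWDR adj) {h i j : ℕ × ℕ} {x y : W} (hxy : tdist adj x y = h) :
    pnum adj h i j = Set.ncard {z : W | tdist adj x z = i ∧ tdist adj z y = j} := by
  have hset : {n | ∃ x' y' : W, tdist adj x' y' = h ∧
      n = Set.ncard {z : W | tdist adj x' z = i ∧ tdist adj z y' = j}}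
      = {Set.ncard {z : W | tdist adj x z = i ∧ tdist adj z y = j}} := by
    ext n
    simp only [Set.mem_setOf_eq, Set.mem_singleton_iff]
    constructor
    · rintro ⟨x', y', hxy', rfl⟩
      exact hw i j x' y' x y (hxy'.trans hxy.symm)
    · rintro rfl
      exact ⟨x, y, hxy, rfl⟩
  rw [pnum, hset, csSup_singleton]

lemma attained_of_pnum_ne_zero {h i j : ℕ × ℕ} (hp : pnum adj h i j ≠ 0) :
    Attained adj h := by
  by_contra hc
  apply hp
  have : {n | ∃ x y : W, tdist adj x y = h ∧
      n = Set.ncard {z : W | tdist adj x z = i ∧ tdist adj z y = j}} = ∅ := by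
    ext n
    simp only [Set.mem_setOf_eq, Set.mem_empty_iff_false, iff_false]
    rintro ⟨x, y, hxy, -⟩
    exact hc ⟨x, y, hxy⟩
  rw [pnum, this, csSup_empty]
  rfl

lemma pnum_ne_zero_of_witness (hw : IsWDR adj) {h i j : ℕ × ℕ} {x y z : W}
    (hxy : tdist adj x y = h) (h1 : tdist adj x z = i) (h2 : tdist adj z y = j) :
    pnum adj h i j ≠ 0 := by
  rw [pnum_eq hw hxy]
  have hz : z ∈ {z : W | tdist adj x z = i ∧ tdist adj z y = j} := ⟨h1, h2⟩
  exact ((Set.ncard_pos (Set.toFinite _)).mpr ⟨z, hz⟩).ne'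

end Pnum

namespace CTWDR

variable {V : Type*} [Fintype V] (G : CTWDR V)

lemma subset_genClosed (F : Set (ℕ × ℕ)) : F ⊆ G.genClosed F := by
  intro i hi
  rw [genClosed, Set.mem_sInter]
  exact fun C hC => hC.1 hi

lemma genClosed_closed (F : Set (ℕ × ℕ)) : G.Closed (G.genClosed F) := by
  intro i hi j hj h hh
  rw [genClosed, Set.mem_sInter]
  intro C hC
  exact hC.2 i (Set.mem_sInter.mp hi C hC) j (Set.mem_sInter.mp hj C hC) hh

lemma genClosed_min {F C : Set (ℕ × ℕ)} (h1 : F ⊆ C) (h2 : G.Closed C) :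
    G.genClosed F ⊆ C :=
  Set.sInter_subset_of_mem ⟨h1, h2⟩

variable {J : Set ℕ}

lemma genClosed_attained (hJ : ∀ t ∈ J, Attained G.adj (1, t - 1)) :
    ∀ i ∈ G.genClosed {i | ∃ t ∈ J, i = (1, t - 1)}, Attained G.adj i := by
  intro i hi
  have hsub : G.genClosed {i | ∃ t ∈ J, i = (1, t - 1)}
      ⊆ G.genClosed {i | ∃ t ∈ J, i = (1, t - 1)} ∩ {i | Attained G.adj i} := by
    apply genClosed_min
    · intro i hi
      obtain ⟨t, ht, rfl⟩ := hi
      exact ⟨G.subset_genClosed _ ⟨t, ht, rfl⟩, hJ t ht⟩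
    · rintro i ⟨hi1, -⟩ j ⟨hj1, -⟩ h hh
      refine ⟨G.genClosed_closed _ i hi1 j hj1 hh, ?_⟩
      obtain ⟨i', hi', j', hj', hp⟩ := hh
      exact attained_of_pnum_ne_zero hp
  exact (hsub hi).2

lemma swap_mem_genClosed (hJ : ∀ t ∈ J, Attained G.adj (1, t - 1)) {i : ℕ × ℕ}
    (hi : i ∈ G.genClosed {i | ∃ t ∈ J, i = (1, t - 1)}) :
    i.swap ∈ G.genClosed {i | ∃ t ∈ J, i = (1, t - 1)} := by
  obtain ⟨x, y, hxy⟩ := G.genClosed_attained hJ i hi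
  have hyx : tdist G.adj y x = i.swap := by rw [tdist_swap, hxy]
  have h00 : (0, 0) ∈ G.genClosed {i | ∃ t ∈ J, i = (1, t - 1)} := by
    apply G.genClosed_closed _ i hi i hi
    exact ⟨i.swap, rfl, i, rfl,
      pnum_ne_zero_of_witness G.wdr (tdist_self G.adj y) hyx hxy⟩
  apply G.genClosed_closed _ i hi (0, 0) h00
  exact ⟨i.swap, rfl, (0, 0), rfl,
    pnum_ne_zero_of_witness G.wdr hyx hyx (tdist_self G.adj x)⟩

variable {x0 : V}

lemma arc_mem_genClosed {t : ℕ} (ht : t ∈ J) :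
    ((1 : ℕ), t - 1) ∈ G.genClosed {i | ∃ t ∈ J, i = (1, t - 1)} :=
  G.subset_genClosed _ ⟨t, ht, rfl⟩

lemma tdist_mem_block {a b : V} (ha : a ∈ G.block J x0) (hb : b ∈ G.block J x0) :
    tdist G.adj a b ∈ G.genClosed {i | ∃ t ∈ J, i = (1, t - 1)} := by
  apply G.genClosed_closed _ _ ha _ hb
  refine ⟨(tdist G.adj x0 a).swap, rfl, tdist G.adj x0 b, rfl, ?_⟩
  exact pnum_ne_zero_of_witness G.wdr rfl (by rw [tdist_swap]) rfl

lemma mem_block_trans (hJ : ∀ t ∈ J, Attained G.adj (1, t - 1)) {a z : V}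
    (ha : a ∈ G.block J x0)
    (ht : tdist G.adj a z ∈ G.genClosed {i | ∃ t ∈ J, i = (1, t - 1)}) :
    z ∈ G.block J x0 := by
  have hsw : (tdist G.adj x0 a).swap ∈ G.genClosed {i | ∃ t ∈ J, i = (1, t - 1)} :=
    G.swap_mem_genClosed hJ ha
  have := G.genClosed_closed {i | ∃ t ∈ J, i = (1, t - 1)} _ hsw _ ht
  apply this
  refine ⟨tdist G.adj x0 a, by simp, tdist G.adj a z, rfl, ?_⟩
  exact pnum_ne_zero_of_witness G.wdr rfl rfl rfl

end CTWDR
set_option linter.unusedSectionVars false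

attribute [local instance] Fintype.ofFinite

namespace CTWDR

variable {V : Type*} [Fintype V] (G : CTWDR V) (J : Set ℕ) (x0 : V)

/-- The adjacency of `Δ_J` on the block, as a named relation. -/
def dadj : ↥(G.block J x0) → ↥(G.block J x0) → Prop :=
  fun u v => deltaAdj G.adj J u.1 v.1

variable {G J x0}

lemma walk_transfer (hJ : ∀ t ∈ J, Attained G.adj (1, t - 1)) :
    ∀ (n : ℕ) (u v u' v' : ↥(G.block J x0)),
      tdist G.adj u.1 v.1 = tdist G.adj u'.1 v'.1 →
      HasWalk (G.dadj J x0) u v n → HasWalk (G.dadj J x0) u' v' n := by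
  intro n
  induction n with
  | zero =>
    intro u v u' v' ht hw
    obtain rfl : u = v := Subtype.ext (congrArg Subtype.val (hasWalk_zero hw))
    rw [tdist_self] at ht
    have h0 : ddist G.adj u'.1 v'.1 = 0 := (congrArg Prod.fst ht.symm : _)
    obtain rfl : u' = v' := Subtype.ext (ddist_eq_zero (G.strong _ _) h0)
    exact hasWalk_refl u'
  | succ n ih =>
    intro u v u' v' ht hw
    obtain ⟨w, harc, hrest⟩ := hasWalk_front hw
    obtain ⟨t, htJ, htw⟩ := harc
    have hIg : tdist G.adj u.1 w.1 ∈ G.genClosed {i | ∃ t ∈ J, i = (1, t - 1)} :=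
      G.tdist_mem_block u.2 w.2
    have hcard : Set.ncard {z : V | tdist G.adj u.1 z = tdist G.adj u.1 w.1 ∧
        tdist G.adj z v.1 = tdist G.adj w.1 v.1} ≠ 0 := by
      have hw1 : w.1 ∈ {z : V | tdist G.adj u.1 z = tdist G.adj u.1 w.1 ∧
          tdist G.adj z v.1 = tdist G.adj w.1 v.1} := ⟨rfl, rfl⟩
      exact ((Set.ncard_pos (Set.toFinite _)).mpr ⟨w.1, hw1⟩).ne'
    rw [G.wdr _ _ u.1 v.1 u'.1 v'.1 ht] at hcard
    obtain ⟨z, hz1, hz2⟩ := Set.nonempty_of_ncard_ne_zero hcard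
    have hzb : z ∈ G.block J x0 := G.mem_block_trans hJ u'.2 (hz1 ▸ hIg)
    refine hasWalk_front' (w := ⟨z, hzb⟩) ⟨t, htJ, by rw [hz1, htw]⟩ ?_
    exact ih w v ⟨z, hzb⟩ v' hz2.symm hrest

lemma ddistD_transfer (hJ : ∀ t ∈ J, Attained G.adj (1, t - 1))
    {u v u' v' : ↥(G.block J x0)}
    (ht : tdist G.adj u.1 v.1 = tdist G.adj u'.1 v'.1) :
    ddist (G.dadj J x0) u v = ddist (G.dadj J x0) u' v' := by
  unfold ddist
  congr 1
  ext n
  exact ⟨walk_transfer hJ n u v u' v' ht, walk_transfer hJ n u' v' u v ht.symm⟩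

lemma tdistD_transfer (hJ : ∀ t ∈ J, Attained G.adj (1, t - 1))
    {u v u' v' : ↥(G.block J x0)}
    (ht : tdist G.adj u.1 v.1 = tdist G.adj u'.1 v'.1) :
    tdist (G.dadj J x0) u v = tdist (G.dadj J x0) u' v' := by
  have ht' : tdist G.adj v.1 u.1 = tdist G.adj v'.1 u'.1 := by
    have := congrArg Prod.swap ht
    rwa [← tdist_swap, ← tdist_swap] at this
  exact Prod.ext (ddistD_transfer hJ ht) (ddistD_transfer hJ ht')

variable (hyp : ∀ a b a' b' : ↥(G.block J x0),
      tdist (fun u v : ↥(G.block J x0) => deltaAdj G.adj J u.1 v.1) a b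
        = tdist (fun u v : ↥(G.block J x0) => deltaAdj G.adj J u.1 v.1) a' b' →
      ddist G.adj a.1 b.1 = ddist G.adj a'.1 b'.1)

include hyp

lemma tdistG_transfer {a b a' b' : ↥(G.block J x0)}
    (h : tdist (G.dadj J x0) a b = tdist (G.dadj J x0) a' b') :
    tdist G.adj a.1 b.1 = tdist G.adj a'.1 b'.1 := by
  have h2 : tdist (G.dadj J x0) b a = tdist (G.dadj J x0) b' a' := by
    have := congrArg Prod.swap h
    rwa [← tdist_swap, ← tdist_swap] at this
  exact Prod.ext (hyp a b a' b' h) (hyp b a b' a' h2)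

lemma reach_total (a b : ↥(G.block J x0)) :
    (∃ n, HasWalk (G.dadj J x0) a b n) ∨ (∃ n, HasWalk (G.dadj J x0) b a n) := by
  by_contra hc
  push_neg at hc
  obtain ⟨h1, h2⟩ := hc
  have e1 : {n | HasWalk (G.dadj J x0) a b n} = ∅ :=
    Set.eq_empty_iff_forall_notMem.mpr fun n hn => h1 n hn
  have e2 : {n | HasWalk (G.dadj J x0) b a n} = ∅ :=
    Set.eq_empty_iff_forall_notMem.mpr fun n hn => h2 n hn
  have htD : tdist (G.dadj J x0) a b = tdist (G.dadj J x0) a a := by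
    rw [tdist_self]
    unfold tdist ddist
    rw [e1, e2, Nat.sInf_empty]
  have h0 : ddist G.adj a.1 b.1 = 0 := by
    have := hyp a b a a htD
    rwa [ddist_self] at this
  have : a = b := Subtype.ext (ddist_eq_zero (G.strong _ _) h0)
  exact h1 0 (this ▸ hasWalk_refl a)

end CTWDR
namespace CTWDR

variable {V : Type*} [Fintype V] {G : CTWDR V} {J : Set ℕ} {x0 : V}

lemma ncard_subtype {p : V → Prop} (hp : ∀ v, p v → v ∈ G.block J x0) :
    Set.ncard {z : ↥(G.block J x0) | p z.1} = Set.ncard {z : V | p z} := by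
  rw [← Set.ncard_image_of_injective {z : ↥(G.block J x0) | p z.1} Subtype.val_injective]
  congr 1
  ext v
  constructor
  · rintro ⟨z, hz, rfl⟩
    exact hz
  · intro hv
    exact ⟨⟨v, hp v hv⟩, hv, rfl⟩

variable (hyp : ∀ a b a' b' : ↥(G.block J x0),
      tdist (fun u v : ↥(G.block J x0) => deltaAdj G.adj J u.1 v.1) a b
        = tdist (fun u v : ↥(G.block J x0) => deltaAdj G.adj J u.1 v.1) a' b' →
      ddist G.adj a.1 b.1 = ddist G.adj a'.1 b'.1)
  (hJ : ∀ t ∈ J, Attained G.adj (1, t - 1))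

include hyp hJ

lemma setEqD {a b z0 : ↥(G.block J x0)} {i j : ℕ × ℕ}
    (h1 : tdist (G.dadj J x0) a z0 = i) (h2 : tdist (G.dadj J x0) z0 b = j) :
    {z : ↥(G.block J x0) | tdist (G.dadj J x0) a z = i ∧ tdist (G.dadj J x0) z b = j}
      = {z : ↥(G.block J x0) | tdist G.adj a.1 z.1 = tdist G.adj a.1 z0.1 ∧
          tdist G.adj z.1 b.1 = tdist G.adj z0.1 b.1} := by
  ext z
  constructor
  · rintro ⟨hz1, hz2⟩
    exact ⟨tdistG_transfer hyp (hz1.trans h1.symm),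
      tdistG_transfer hyp (hz2.trans h2.symm)⟩
  · rintro ⟨g1, g2⟩
    exact ⟨(tdistD_transfer hJ g1).trans h1, (tdistD_transfer hJ g2).trans h2⟩

lemma wdr_auxD {i j : ℕ × ℕ} {a b a' b' : ↥(G.block J x0)}
    (hD : tdist (G.dadj J x0) a b = tdist (G.dadj J x0) a' b')
    (hne : {z : ↥(G.block J x0) | tdist (G.dadj J x0) a z = i ∧
        tdist (G.dadj J x0) z b = j}.Nonempty) :
    {z : ↥(G.block J x0) | tdist (G.dadj J x0) a' z = i ∧
        tdist (G.dadj J x0) z b' = j}.Nonempty ∧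
    Set.ncard {z : ↥(G.block J x0) | tdist (G.dadj J x0) a z = i ∧
        tdist (G.dadj J x0) z b = j}
      = Set.ncard {z : ↥(G.block J x0) | tdist (G.dadj J x0) a' z = i ∧
        tdist (G.dadj J x0) z b' = j} := by
  obtain ⟨z0, hz01, hz02⟩ := hne
  have hG : tdist G.adj a.1 b.1 = tdist G.adj a'.1 b'.1 := tdistG_transfer hyp hD
  set I := tdist G.adj a.1 z0.1 with hI
  set Jv := tdist G.adj z0.1 b.1 with hJv
  have hIg : I ∈ G.genClosed {i | ∃ t ∈ J, i = (1, t - 1)} :=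
    G.tdist_mem_block a.2 z0.2
  -- find a witness for the primed pair
  have hcard : Set.ncard {z : V | tdist G.adj a.1 z = I ∧ tdist G.adj z b.1 = Jv} ≠ 0 := by
    have hz : z0.1 ∈ {z : V | tdist G.adj a.1 z = I ∧ tdist G.adj z b.1 = Jv} := ⟨rfl, rfl⟩
    exact ((Set.ncard_pos (Set.toFinite _)).mpr ⟨z0.1, hz⟩).ne'
  have hwdr := G.wdr I Jv a.1 b.1 a'.1 b'.1 hG
  have hcard' := hwdr ▸ hcard
  obtain ⟨z', hz'1, hz'2⟩ := Set.nonempty_of_ncard_ne_zero hcard'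
  have hz'b : z' ∈ G.block J x0 := G.mem_block_trans hJ a'.2 (hz'1 ▸ hIg)
  have hz0'1 : tdist (G.dadj J x0) a' ⟨z', hz'b⟩ = i :=
    (tdistD_transfer hJ (hz'1 : tdist G.adj a'.1 z' = I)).trans hz01
  have hz0'2 : tdist (G.dadj J x0) ⟨z', hz'b⟩ b' = j :=
    (tdistD_transfer hJ (hz'2 : tdist G.adj z' b'.1 = Jv)).trans hz02
  constructor
  · exact ⟨⟨z', hz'b⟩, hz0'1, hz0'2⟩
  · rw [setEqD hyp hJ hz01 hz02, setEqD hyp hJ hz0'1 hz0'2]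
    have e1 : tdist G.adj a'.1 (⟨z', hz'b⟩ : ↥(G.block J x0)).1 = I := hz'1
    have e2 : tdist G.adj (⟨z', hz'b⟩ : ↥(G.block J x0)).1 b'.1 = Jv := hz'2
    rw [e1, e2]
    have hmem : ∀ v : V, (tdist G.adj a.1 v = I ∧ tdist G.adj v b.1 = Jv) →
        v ∈ G.block J x0 := fun v hv => G.mem_block_trans hJ a.2 (hv.1 ▸ hIg)
    have hmem' : ∀ v : V, (tdist G.adj a'.1 v = I ∧ tdist G.adj v b'.1 = Jv) →
        v ∈ G.block J x0 := fun v hv => G.mem_block_trans hJ a'.2 (hv.1 ▸ hIg)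
    rw [ncard_subtype hmem, ncard_subtype hmem']
    exact hwdr

lemma wdrD : IsWDR (G.dadj J x0) := by
  intro i j a b a' b' hD
  by_cases hne : {z : ↥(G.block J x0) | tdist (G.dadj J x0) a z = i ∧
      tdist (G.dadj J x0) z b = j}.Nonempty
  · exact (wdr_auxD hyp hJ hD hne).2
  · by_cases hne' : {z : ↥(G.block J x0) | tdist (G.dadj J x0) a' z = i ∧
        tdist (G.dadj J x0) z b' = j}.Nonempty
    · exact absurd (wdr_auxD hyp hJ hD.symm hne').1 hne
    · rw [Set.not_nonempty_iff_eq_empty.mp hne, Set.not_nonempty_iff_eq_empty.mp hne']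

end CTWDR
open scoped Classical

open Finset in
lemma count_const {V : Type*} [Fintype V] (G : CTWDR V) (P : ℕ × ℕ → Prop)
    (u u' : V) :
    (univ.filter fun b => P (tdist G.adj u b)).card
      = (univ.filter fun b => P (tdist G.adj u' b)).card := by
  classical
  set T : Finset (ℕ × ℕ) :=
    ((univ ×ˢ univ).image fun p : V × V => tdist G.adj p.1 p.2).filter P with hT
  have key : ∀ w : V, (univ.filter fun b => P (tdist G.adj w b)).card
      = ∑ i ∈ T, (univ.filter fun b => tdist G.adj w b = i).card := by
    intro w
    rw [Finset.card_eq_sum_card_fiberwise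
      (f := fun b => tdist G.adj w b) (t := T) ?_]
    · apply Finset.sum_congr rfl
      intro i hi
      congr 1
      ext b
      simp only [mem_filter, mem_univ, true_and, hT] at hi ⊢
      constructor
      · rintro ⟨-, h⟩; exact h
      · intro h; exact ⟨h ▸ hi.2, h⟩
    · intro b hb
      simp only [mem_filter, mem_univ, true_and, hT] at hb ⊢
      exact Finset.mem_filter.mpr ⟨Finset.mem_image.mpr ⟨(w, b), by simp, rfl⟩, by simpa using hb⟩
  rw [key u, key u']
  apply Finset.sum_congr rfl
  intro i _
  have hred : ∀ w : V, {z : V | tdist G.adj w z = i ∧ tdist G.adj z w = i.swap}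
      = {z : V | tdist G.adj w z = i} := by
    intro w
    ext z
    simp only [Set.mem_setOf_eq, and_iff_left_iff_imp]
    intro h
    rw [tdist_swap, h]
  have hwdr := G.wdr i i.swap u u u' u'
    ((tdist_self G.adj u).trans (tdist_self G.adj u').symm)
  rw [hred u, hred u'] at hwdr
  have conv : ∀ w : V, Set.ncard {z : V | tdist G.adj w z = i}
      = (univ.filter fun b => tdist G.adj w b = i).card := by
    intro w
    rw [Set.ncard_eq_toFinset_card']
    congr 1
    ext z
    simp
  rw [← conv u, ← conv u', hwdr]

namespace CTWDR

attribute [local instance] Fintype.ofFinite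

open Finset

variable {V : Type*} [Fintype V] {G : CTWDR V} {J : Set ℕ} {x0 : V}

lemma card_subtype_filter {p : V → Prop} (hp : ∀ v, p v → v ∈ G.block J x0) :
    (univ.filter fun b : ↥(G.block J x0) => p b.1).card = (univ.filter p).card := by
  classical
  apply Finset.card_bij (fun b _ => b.1)
  · intro b hb
    simp only [mem_filter, mem_univ, true_and] at hb ⊢
    exact hb
  · intro b1 _ b2 _ h
    exact Subtype.ext h
  · intro b hb
    simp only [mem_filter, mem_univ, true_and] at hb
    exact ⟨⟨b, hp b hb⟩, by simp [hb], rfl⟩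

lemma dadj_iff (u v : V) :
    deltaAdj G.adj J u v ↔ tdist G.adj u v ∈ {i : ℕ × ℕ | ∃ t ∈ J, i = (1, t - 1)} := by
  simp [deltaAdj, Set.mem_setOf_eq]

lemma dadj_mem_block (hJ : ∀ t ∈ J, Attained G.adj (1, t - 1)) {u v : V}
    (hu : u ∈ G.block J x0) (h : deltaAdj G.adj J u v) : v ∈ G.block J x0 := by
  obtain ⟨t, ht, htv⟩ := h
  exact G.mem_block_trans hJ hu (htv ▸ G.arc_mem_genClosed ht)

variable (hJ : ∀ t ∈ J, Attained G.adj (1, t - 1))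
include hJ

lemma outdeg_const (u u' : ↥(G.block J x0)) :
    (univ.filter fun v : ↥(G.block J x0) => G.dadj J x0 u v).card
      = (univ.filter fun v : ↥(G.block J x0) => G.dadj J x0 u' v).card := by
  classical
  have h1 : ∀ w : ↥(G.block J x0),
      (univ.filter fun v : ↥(G.block J x0) => G.dadj J x0 w v).card
        = (univ.filter fun v : V => deltaAdj G.adj J w.1 v).card := by
    intro w
    exact card_subtype_filter (fun v hv => dadj_mem_block hJ w.2 hv)
  rw [h1 u, h1 u']
  have h2 : ∀ w : V, (univ.filter fun v : V => deltaAdj G.adj J w v)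
      = (univ.filter fun v : V =>
          tdist G.adj w v ∈ {i : ℕ × ℕ | ∃ t ∈ J, i = (1, t - 1)}) := by
    intro w
    ext v
    simp only [mem_filter, dadj_iff]
  rw [h2, h2]
  exact count_const G (fun i => i ∈ {i : ℕ × ℕ | ∃ t ∈ J, i = (1, t - 1)}) u.1 u'.1

lemma indeg_const (u u' : ↥(G.block J x0)) :
    (univ.filter fun v : ↥(G.block J x0) => G.dadj J x0 v u).card
      = (univ.filter fun v : ↥(G.block J x0) => G.dadj J x0 v u').card := by
  classical
  have hp : ∀ w : ↥(G.block J x0), ∀ v : V, deltaAdj G.adj J v w.1 → v ∈ G.block J x0 := by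
    intro w v hv
    obtain ⟨t, ht, htv⟩ := hv
    apply G.mem_block_trans hJ w.2
    have : tdist G.adj w.1 v = ((1 : ℕ), t - 1).swap := by rw [tdist_swap, htv]
    exact this ▸ G.swap_mem_genClosed hJ (G.arc_mem_genClosed ht)
  have h1 : ∀ w : ↥(G.block J x0),
      (univ.filter fun v : ↥(G.block J x0) => G.dadj J x0 v w).card
        = (univ.filter fun v : V => deltaAdj G.adj J v w.1).card := by
    intro w
    exact card_subtype_filter (hp w)
  rw [h1 u, h1 u']
  have h2 : ∀ w : V, (univ.filter fun v : V => deltaAdj G.adj J v w)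
      = (univ.filter fun v : V =>
          (tdist G.adj w v).swap ∈ {i : ℕ × ℕ | ∃ t ∈ J, i = (1, t - 1)}) := by
    intro w
    ext v
    simp only [mem_filter, dadj_iff]
    rw [tdist_swap]
  rw [h2, h2]
  exact count_const G
    (fun i => i.swap ∈ {i : ℕ × ℕ | ∃ t ∈ J, i = (1, t - 1)}) u.1 u'.1

end CTWDR
namespace CTWDR

open Finset

variable {V : Type*} [Fintype V] {G : CTWDR V} {J : Set ℕ} {x0 : V}

variable (hyp : ∀ a b a' b' : ↥(G.block J x0),
      tdist (fun u v : ↥(G.block J x0) => deltaAdj G.adj J u.1 v.1) a b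
        = tdist (fun u v : ↥(G.block J x0) => deltaAdj G.adj J u.1 v.1) a' b' →
      ddist G.adj a.1 b.1 = ddist G.adj a'.1 b'.1)
  (hJ : ∀ t ∈ J, Attained G.adj (1, t - 1))

include hyp hJ

lemma strongD : IsStrong (G.dadj J x0) := by
  intro a b
  set E := G.dadj J x0 with hE
  set c := (univ.filter fun v : ↥(G.block J x0) => E a v).card with hc
  have hout : ∀ u : ↥(G.block J x0), (univ.filter fun v => E u v).card = c :=
    fun u => outdeg_const hJ u a
  have hc' : ∀ v : ↥(G.block J x0), (univ.filter fun u => E u v).card = c := by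
    intro v
    have hsum : ∑ u : ↥(G.block J x0), (univ.filter fun v => E u v).card
        = ∑ v : ↥(G.block J x0), (univ.filter fun u => E u v).card := by
      simp_rw [Finset.card_filter]
      exact Finset.sum_comm
    have h1 : ∑ u : ↥(G.block J x0), (univ.filter fun v => E u v).card
        = (univ : Finset ↥(G.block J x0)).card * c := by
      rw [Finset.sum_congr rfl fun u _ => hout u, Finset.sum_const, smul_eq_mul]
    have h2 : ∑ w : ↥(G.block J x0), (univ.filter fun u => E u w).card
        = (univ : Finset ↥(G.block J x0)).card
          * (univ.filter fun u => E u v).card := by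
      rw [Finset.sum_congr rfl fun w _ => indeg_const hJ w v, Finset.sum_const,
        smul_eq_mul]
    have := h1.symm.trans (hsum.trans h2)
    exact (Nat.eq_of_mul_eq_mul_left
      (Finset.card_pos.mpr ⟨a, mem_univ a⟩) this.symm)
  set S : Finset ↥(G.block J x0) := univ.filter fun v => ∃ n, HasWalk E a v n
    with hS
  have haS : a ∈ S := mem_filter.mpr ⟨mem_univ _, 0, hasWalk_refl a⟩
  have hSout : ∀ u ∈ S, ∀ v, E u v → v ∈ S := by
    intro u hu v huv
    obtain ⟨n, hw⟩ := (mem_filter.mp hu).2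
    exact mem_filter.mpr ⟨mem_univ _, n + 1, hasWalk_back' hw huv⟩
  have e1 : ∀ u ∈ S, (univ.filter fun v => E u v) = (S.filter fun v => E u v) := by
    intro u hu
    ext v
    simp only [mem_filter, mem_univ, true_and]
    exact ⟨fun h => ⟨hSout u hu v h, h⟩, fun h => h.2⟩
  have hbig : ∑ u ∈ S, (S.filter fun v => E u v).card = S.card * c := by
    rw [Finset.sum_congr rfl fun u hu => ((congrArg Finset.card (e1 u hu)).symm :
      (S.filter fun v => E u v).card = (univ.filter fun v => E u v).card)]
    rw [Finset.sum_congr rfl fun u _ => hout u, Finset.sum_const, smul_eq_mul]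
  have hswap : ∑ u ∈ S, (S.filter fun v => E u v).card
      = ∑ v ∈ S, (S.filter fun u => E u v).card := by
    simp_rw [Finset.card_filter]
    exact Finset.sum_comm
  have hle : ∀ v ∈ S, (S.filter fun u => E u v).card
      ≤ (univ.filter fun u => E u v).card :=
    fun v _ => Finset.card_le_card (Finset.filter_subset_filter _ (subset_univ S))
  have heq : ∑ v ∈ S, (S.filter fun u => E u v).card
      = ∑ v ∈ S, (univ.filter fun u => E u v).card := by
    rw [← hswap, hbig, Finset.sum_congr rfl fun v _ => hc' v, Finset.sum_const,
      smul_eq_mul]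
  have hpoint := (Finset.sum_eq_sum_iff_of_le hle).mp heq
  have hSin : ∀ v ∈ S, ∀ u, E u v → u ∈ S := by
    intro v hv u huv
    have hcards := hpoint v hv
    have hsets := Finset.eq_of_subset_of_card_le
      (Finset.filter_subset_filter _ (subset_univ S)) (le_of_eq hcards.symm)
    have : u ∈ S.filter fun u => E u v := by
      rw [hsets]
      exact mem_filter.mpr ⟨mem_univ u, huv⟩
    exact (mem_filter.mp this).1
  have hwalkin : ∀ n (u v : ↥(G.block J x0)), HasWalk E u v n → v ∈ S → u ∈ S := by
    intro n
    induction n with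
    | zero =>
      intro u v hw hv
      rwa [hasWalk_zero hw]
    | succ n ih =>
      intro u v hw hv
      obtain ⟨w, hw1, hw2⟩ := hasWalk_back hw
      exact ih u w hw1 (hSin v hv w hw2)
  rcases reach_total hyp a b with h | ⟨n, hw⟩
  · exact h
  · exact (mem_filter.mp (hwalkin n b a hw haS)).2

end CTWDR
namespace CTWDR

variable {V : Type*} [Fintype V] {G : CTWDR V} {J : Set ℕ} {x0 : V}

variable (hyp : ∀ a b a' b' : ↥(G.block J x0),
      tdist (fun u v : ↥(G.block J x0) => deltaAdj G.adj J u.1 v.1) a b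
        = tdist (fun u v : ↥(G.block J x0) => deltaAdj G.adj J u.1 v.1) a' b' →
      ddist G.adj a.1 b.1 = ddist G.adj a'.1 b'.1)
  (hJ : ∀ t ∈ J, Attained G.adj (1, t - 1))

include hyp hJ

lemma pnumD_eq_pnumG {h i j : ℕ × ℕ} {a b z0 : ↥(G.block J x0)}
    (hab : tdist (G.dadj J x0) a b = h)
    (hz1 : tdist (G.dadj J x0) a z0 = i) (hz2 : tdist (G.dadj J x0) z0 b = j) :
    pnum (G.dadj J x0) h i j
      = pnum G.adj (tdist G.adj a.1 b.1) (tdist G.adj a.1 z0.1)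
          (tdist G.adj z0.1 b.1) := by
  have hIg : tdist G.adj a.1 z0.1 ∈ G.genClosed {i | ∃ t ∈ J, i = (1, t - 1)} :=
    G.tdist_mem_block a.2 z0.2
  rw [pnum_eq (wdrD hyp hJ) hab,
    pnum_eq G.wdr (rfl : tdist G.adj a.1 b.1 = tdist G.adj a.1 b.1),
    setEqD hyp hJ hz1 hz2]
  exact ncard_subtype
    (p := fun z => tdist G.adj a.1 z = tdist G.adj a.1 z0.1 ∧
      tdist G.adj z b.1 = tdist G.adj z0.1 b.1)
    (fun v hv => G.mem_block_trans hJ a.2 (hv.1 ▸ hIg))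

lemma kvalD_eq {i : ℕ × ℕ} {a z0 : ↥(G.block J x0)}
    (hz1 : tdist (G.dadj J x0) a z0 = i) :
    kval (G.dadj J x0) i = kval G.adj (tdist G.adj a.1 z0.1) := by
  have hIg : tdist G.adj a.1 z0.1 ∈ G.genClosed {i | ∃ t ∈ J, i = (1, t - 1)} :=
    G.tdist_mem_block a.2 z0.2
  have redD : {z : ↥(G.block J x0) | tdist (G.dadj J x0) a z = i ∧
      tdist (G.dadj J x0) z a = i.swap}
      = {z : ↥(G.block J x0) | tdist (G.dadj J x0) a z = i} := by
    ext z
    simp only [Set.mem_setOf_eq, and_iff_left_iff_imp]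
    intro hz
    rw [tdist_swap, hz]
  have redG : {z : V | tdist G.adj a.1 z = tdist G.adj a.1 z0.1 ∧
      tdist G.adj z a.1 = (tdist G.adj a.1 z0.1).swap}
      = {z : V | tdist G.adj a.1 z = tdist G.adj a.1 z0.1} := by
    ext z
    simp only [Set.mem_setOf_eq, and_iff_left_iff_imp]
    intro hz
    rw [tdist_swap, hz]
  have setEq : {z : ↥(G.block J x0) | tdist (G.dadj J x0) a z = i}
      = {z : ↥(G.block J x0) | tdist G.adj a.1 z.1 = tdist G.adj a.1 z0.1} := by
    ext z
    constructor
    · intro hz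
      exact tdistG_transfer hyp (hz.trans hz1.symm)
    · intro hz
      exact (tdistD_transfer hJ hz).trans hz1
  rw [kval, kval, pnum_eq (wdrD hyp hJ) (tdist_self (G.dadj J x0) a),
    pnum_eq G.wdr (tdist_self G.adj a.1), redD, redG, setEq]
  exact ncard_subtype
    (p := fun z => tdist G.adj a.1 z = tdist G.adj a.1 z0.1)
    (fun v hv => G.mem_block_trans hJ a.2 (hv ▸ hIg))

lemma thickD : IsThick (G.dadj J x0) := by
  intro h i
  by_cases hAtt : ∃ a b : ↥(G.block J x0), tdist (G.dadj J x0) a b = h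
  · obtain ⟨a, b, hab⟩ := hAtt
    constructor
    · by_cases hne : {z : ↥(G.block J x0) | tdist (G.dadj J x0) a z = i ∧
          tdist (G.dadj J x0) z b = i}.Nonempty
      · obtain ⟨z0, hz1, hz2⟩ := hne
        have hJv : tdist G.adj z0.1 b.1 = tdist G.adj a.1 z0.1 :=
          tdistG_transfer hyp (hz2.trans hz1.symm)
        right
        rw [pnumD_eq_pnumG hyp hJ hab hz1 hz2, kvalD_eq hyp hJ hz1, hJv]
        rcases (G.thick (tdist G.adj a.1 b.1) (tdist G.adj a.1 z0.1)).1 with h0 | hk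
        · exact absurd h0 (pnum_ne_zero_of_witness G.wdr rfl rfl hJv)
        · exact hk
      · left
        rw [pnum_eq (wdrD hyp hJ) hab, Set.not_nonempty_iff_eq_empty.mp hne,
          Set.ncard_empty]
    · by_cases hne : {z : ↥(G.block J x0) | tdist (G.dadj J x0) a z = i ∧
          tdist (G.dadj J x0) z b = i.swap}.Nonempty
      · obtain ⟨z0, hz1, hz2⟩ := hne
        have hza : tdist (G.dadj J x0) z0 a = i.swap := by
          rw [tdist_swap, hz1]
        have hJv : tdist G.adj z0.1 b.1 = (tdist G.adj a.1 z0.1).swap := by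
          have := tdistG_transfer hyp (hz2.trans hza.symm)
          rw [this, tdist_swap]
        right
        rw [pnumD_eq_pnumG hyp hJ hab hz1 hz2, kvalD_eq hyp hJ hz1, hJv]
        rcases (G.thick (tdist G.adj a.1 b.1) (tdist G.adj a.1 z0.1)).2 with h0 | hk
        · exact absurd h0 (pnum_ne_zero_of_witness G.wdr rfl rfl hJv)
        · exact hk
      · left
        rw [pnum_eq (wdrD hyp hJ) hab, Set.not_nonempty_iff_eq_empty.mp hne,
          Set.ncard_empty]
  · have hemp : ∀ j : ℕ × ℕ, pnum (G.dadj J x0) h i j = 0 := by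
      intro j
      have : {n | ∃ x y : ↥(G.block J x0), tdist (G.dadj J x0) x y = h ∧
          n = Set.ncard {z : ↥(G.block J x0) | tdist (G.dadj J x0) x z = i ∧
            tdist (G.dadj J x0) z y = j}} = ∅ := by
        ext n
        simp only [Set.mem_setOf_eq, Set.mem_empty_iff_false, iff_false]
        rintro ⟨x, y, hxy, -⟩
        exact hAtt ⟨x, y, hxy⟩
      rw [pnum, this, csSup_empty]
      rfl
    exact ⟨Or.inl (hemp i), Or.inl (hemp i.swap)⟩

end CTWDR


/-- Lemma 6.6: if in `Δ_J` equal two-way distances force equal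
`Γ`-distances, then `Δ_J` is a thick weakly distance-regular digraph. -/
theorem stmt17 {V : Type*} [Fintype V] (G : CTWDR V) (J : Set ℕ)
    (hJ : ∀ t ∈ J, Attained G.adj (1, t - 1)) (x0 : V)
    (hyp : ∀ a b a' b' : ↥(G.block J x0),
      tdist (fun u v : ↥(G.block J x0) => deltaAdj G.adj J u.1 v.1) a b
        = tdist (fun u v : ↥(G.block J x0) => deltaAdj G.adj J u.1 v.1) a' b' →
      ddist G.adj a.1 b.1 = ddist G.adj a'.1 b'.1) :
    IsWDRThick (fun u v : ↥(G.block J x0) => deltaAdj G.adj J u.1 v.1) := by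
  exact ⟨CTWDR.strongD hyp hJ, CTWDR.wdrD hyp hJ, CTWDR.thickD hyp hJ⟩
end
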